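/- arXiv:2011.07677 — 3 statements merged into one kernel-verified Lean document; each statement's English description precedes it below -/
import Mathlib

section
/- Under the two-stage randomized design, the estimator Ŷ(z,a) is unbiased for the population average potential outcome: for every treatment condition z ∈ {0,1} and every treatment assignment mechanism a ∈ {1,…,m}, E[Ŷ(z,a)] = Ȳ(z,a), where the expectation is over the two-stage randomization of (A, Z). -/
/-!
Two-stage randomized experiments (Jiang & Imai).
STATEMENT 0: Unbiasedness of Ŷ(z,a): E[Ŷ(z,a)] = Ȳ(z,a).
-/

open scoped BigOperators

noncomputable section

/-- A two-stage randomized design: `J` clusters, the `j`-th of size `n j`,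
`m` treatment assignment mechanisms, `Jc a` clusters assigned to mechanism `a`,
`n1 j a` treated units in cluster `j` under mechanism `a`, and fixed potential
outcomes `Y j i z a` (with `z : Bool`, `true` = treatment). -/
structure TwoStageDesign where
  J : ℕ
  m : ℕ
  n : Fin J → ℕ
  Jc : Fin m → ℕ
  n1 : Fin J → Fin m → ℕ
  Y : (j : Fin J) → Fin (n j) → Bool → Fin m → ℝ

namespace TwoStageDesign

variable (d : TwoStageDesign)

/-- The number of units in cluster `j` assigned to condition `z` under mechanism `a`. -/
def nz (z : Bool) (j : Fin d.J) (a : Fin d.m) : ℕ :=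
  if z then d.n1 j a else d.n j - d.n1 j a

/-- Admissible first-stage assignments: mechanism `a` is given to exactly `Jc a` clusters. -/
def mechA : Finset (Fin d.J → Fin d.m) :=
  Finset.univ.filter fun A => ∀ a, (Finset.univ.filter fun j => A j = a).card = d.Jc a

/-- Admissible second-stage assignments given the first stage `A`: the treated set in
cluster `j` has exactly `n1 j (A j)` units. -/
def treatA (A : Fin d.J → Fin d.m) : Finset ((j : Fin d.J) → Finset (Fin (d.n j))) :=
  Finset.univ.filter fun S => ∀ j, (S j).card = d.n1 j (A j)

/-- Expectation with respect to the two-stage randomization: `A` is uniform on the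
admissible first-stage assignments and, given `A`, the treated sets are uniform on the
admissible second-stage assignments (independently across clusters). -/
def expec (f : (Fin d.J → Fin d.m) → ((j : Fin d.J) → Finset (Fin (d.n j))) → ℝ) : ℝ :=
  ∑ A ∈ d.mechA, ∑ S ∈ d.treatA A,
    f A S / ((d.mechA.card : ℝ) * ((d.treatA A).card : ℝ))

/-- Covariance under the two-stage randomization. -/
def cov (f g : (Fin d.J → Fin d.m) → ((j : Fin d.J) → Finset (Fin (d.n j))) → ℝ) : ℝ :=
  d.expec fun A S => (f A S - d.expec f) * (g A S - d.expec g)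

/-- Variance under the two-stage randomization. -/
def var (f : (Fin d.J → Fin d.m) → ((j : Fin d.J) → Finset (Fin (d.n j))) → ℝ) : ℝ :=
  d.cov f f

/-- Observed outcome of unit `i` in cluster `j`: `Y_{ij} = Y_{ij}(Z_{ij}, A_j)`. -/
def Yobs (A : Fin d.J → Fin d.m) (S : (j : Fin d.J) → Finset (Fin (d.n j)))
    (j : Fin d.J) (i : Fin (d.n j)) : ℝ :=
  d.Y j i (decide (i ∈ S j)) (A j)

/-- `Ŷ_j(z)`: average observed outcome among units of cluster `j` with `Z_{ij} = z`. -/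
def hatYj (A : Fin d.J → Fin d.m) (S : (j : Fin d.J) → Finset (Fin (d.n j)))
    (z : Bool) (j : Fin d.J) : ℝ :=
  (∑ i ∈ Finset.univ.filter (fun i => decide (i ∈ S j) = z), d.Yobs A S j i) /
    ((Finset.univ.filter (fun i : Fin (d.n j) => decide (i ∈ S j) = z)).card : ℝ)

/-- `Ŷ(z,a)`: average of `Ŷ_j(z)` over clusters with `A_j = a`. -/
def hatY (A : Fin d.J → Fin d.m) (S : (j : Fin d.J) → Finset (Fin (d.n j)))
    (z : Bool) (a : Fin d.m) : ℝ :=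
  (∑ j ∈ Finset.univ.filter (fun j => A j = a), d.hatYj A S z j) / (d.Jc a : ℝ)

/-- `Ȳ_j(z,a)`: cluster-level average potential outcome. -/
def Ybarj (j : Fin d.J) (z : Bool) (a : Fin d.m) : ℝ :=
  (∑ i, d.Y j i z a) / (d.n j : ℝ)

/-- `Ȳ(z,a)`: population-level average potential outcome. -/
def Ybar (z : Bool) (a : Fin d.m) : ℝ :=
  (∑ j, d.Ybarj j z a) / (d.J : ℝ)

end TwoStageDesign


section Aux
open Finset

lemma card_mem_powersetCard {n t : ℕ} (ht : 1 ≤ t) (i : Fin n) :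
    ((Finset.univ.powersetCard t).filter (fun T => i ∈ T)).card = Nat.choose (n-1) (t-1) := by
  have key : ((Finset.univ.powersetCard t).filter (fun T => i ∈ T)).card
      = ((Finset.univ.erase i).powersetCard (t-1)).card := by
    refine Finset.card_bij' (fun T _ => T.erase i) (fun T _ => insert i T) ?_ ?_ ?_ ?_
    · intro T hT
      simp only [mem_filter, mem_powersetCard_univ] at hT
      rw [mem_powersetCard]
      constructor
      · intro x hx
        simp only [mem_erase] at hx ⊢
        exact ⟨hx.1, mem_univ x⟩
      · rw [card_erase_of_mem hT.2, hT.1]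
    · intro T hT
      rw [mem_powersetCard] at hT
      have hi : i ∉ T := fun h => (mem_erase.1 (hT.1 h)).1 rfl
      simp only [mem_filter, mem_powersetCard_univ]
      refine ⟨?_, mem_insert_self i T⟩
      rw [card_insert_of_notMem hi, hT.2]
      omega
    · intro T hT
      simp only [mem_filter] at hT
      exact insert_erase hT.2
    · intro T hT
      rw [mem_powersetCard] at hT
      have hi : i ∉ T := fun h => (mem_erase.1 (hT.1 h)).1 rfl
      exact erase_insert hi
  rw [key, card_powersetCard, card_erase_of_mem (mem_univ i), card_univ, Fintype.card_fin]

lemma sum_powersetCard_sum_mem {n t : ℕ} (ht : 1 ≤ t) (Y : Fin n → ℝ) :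
    ∑ T ∈ Finset.univ.powersetCard t, ∑ i ∈ T, Y i
      = (Nat.choose (n-1) (t-1) : ℝ) * ∑ i, Y i := by
  have h1 : ∀ T ∈ Finset.univ.powersetCard t, ∑ i ∈ T, Y i
      = ∑ i : Fin n, if i ∈ T then Y i else 0 := by
    intro T hT
    rw [Finset.sum_ite_mem, Finset.univ_inter]
  rw [Finset.sum_congr rfl h1, Finset.sum_comm, Finset.mul_sum]
  refine Finset.sum_congr rfl fun i _ => ?_
  rw [← Finset.sum_filter, Finset.sum_const, card_mem_powersetCard ht i]
  simp [mul_comm]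

lemma avg_powersetCard {n t : ℕ} (ht1 : 1 ≤ t) (ht2 : t ≤ n) (Y : Fin n → ℝ) :
    ∑ T ∈ Finset.univ.powersetCard t, (∑ i ∈ T, Y i) / (t : ℝ)
      = (Nat.choose n t : ℝ) * ((∑ i, Y i) / n) := by
  have hn : 1 ≤ n := le_trans ht1 ht2
  have hid : n * Nat.choose (n-1) (t-1) = Nat.choose n t * t := by
    have := Nat.add_one_mul_choose_eq (n-1) (t-1)
    have h1 : n - 1 + 1 = n := by omega
    have h2 : t - 1 + 1 = t := by omega
    rw [h1, h2] at this
    exact this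
  have hidR : (n : ℝ) * (Nat.choose (n-1) (t-1) : ℝ) = (Nat.choose n t : ℝ) * t := by
    exact_mod_cast congrArg (Nat.cast : ℕ → ℝ) hid
  rw [← Finset.sum_div, sum_powersetCard_sum_mem ht1]
  have htpos : (0:ℝ) < t := by exact_mod_cast ht1
  have hnpos : (0:ℝ) < n := by exact_mod_cast hn
  field_simp
  linear_combination (∑ i : Fin n, Y i) * hidR

lemma avg_filter_decide {n t : ℕ} (h1 : 1 ≤ t) (h2 : t + 1 ≤ n) (z : Bool) (c : Fin n → ℝ) :
    ∑ T ∈ Finset.univ.powersetCard t,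
      (∑ i ∈ Finset.univ.filter (fun i => decide (i ∈ T) = z), c i) /
        ((Finset.univ.filter (fun i : Fin n => decide (i ∈ T) = z)).card : ℝ)
    = (Nat.choose n t : ℝ) * ((∑ i, c i) / n) := by
  cases z with
  | true =>
    have hfil : ∀ T : Finset (Fin n),
        Finset.univ.filter (fun i => decide (i ∈ T) = true) = T := by
      intro T; ext i; simp
    simp only [hfil]
    have := avg_powersetCard h1 (by omega) c
    rw [← this]
    refine Finset.sum_congr rfl fun T hT => ?_
    rw [mem_powersetCard_univ] at hT
    rw [hT]
  | false =>
    have hfil : ∀ T : Finset (Fin n),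
        Finset.univ.filter (fun i => decide (i ∈ T) = false) = Tᶜ := by
      intro T; ext i; simp
    simp only [hfil]
    have step : ∑ T ∈ Finset.univ.powersetCard t, (∑ i ∈ Tᶜ, c i) / ((Tᶜ.card : ℝ))
        = ∑ U ∈ Finset.univ.powersetCard (n - t), (∑ i ∈ U, c i) / ((n - t : ℕ) : ℝ) := by
      refine Finset.sum_nbij' (fun T => Tᶜ) (fun U => Uᶜ) ?_ ?_ ?_ ?_ ?_
      · intro T hT
        rw [mem_powersetCard_univ] at hT ⊢
        rw [card_compl, Fintype.card_fin, hT]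
      · intro U hU
        rw [mem_powersetCard_univ] at hU ⊢
        rw [card_compl, Fintype.card_fin, hU]
        omega
      · intro T _; simp
      · intro U _; simp
      · intro T hT
        rw [mem_powersetCard_univ] at hT
        rw [card_compl, Fintype.card_fin, hT]
    rw [step, avg_powersetCard (by omega) (by omega) c, Nat.choose_symm (by omega)]


lemma sum_piFinset_eval {ι : Type*} [DecidableEq ι] [Fintype ι] {α : ι → Type*}
    [∀ i, DecidableEq (α i)] [∀ i, Fintype (α i)]
    (t : ∀ i, Finset (α i)) (j : ι) (g : α j → ℝ) :
    ∑ S ∈ Fintype.piFinset t, g (S j)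
      = (∏ k ∈ Finset.univ.erase j, ((t k).card : ℝ)) * ∑ T ∈ t j, g T := by
  have hmaps : ∀ S ∈ Fintype.piFinset t, S j ∈ t j := fun S hS =>
    (Fintype.mem_piFinset.1 hS) j
  rw [← Finset.sum_fiberwise_of_maps_to hmaps, Finset.mul_sum]
  refine Finset.sum_congr rfl fun T hT => ?_
  have hfib : (Fintype.piFinset t).filter (fun S => S j = T)
      = Fintype.piFinset (Function.update t j {T}) := by
    ext S
    simp only [mem_filter, Fintype.mem_piFinset]
    constructor
    · rintro ⟨hS, hSj⟩ k
      rcases eq_or_ne k j with rfl | hk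
      · rw [Function.update_self, mem_singleton]; exact hSj
      · rw [Function.update_of_ne hk]; exact hS k
    · intro h
      have hj := h j
      rw [Function.update_self, mem_singleton] at hj
      refine ⟨fun k => ?_, hj⟩
      rcases eq_or_ne k j with rfl | hk
      · rw [hj]; exact hT
      · have := h k; rwa [Function.update_of_ne hk] at this
  have hsum : ∑ S ∈ (Fintype.piFinset t).filter (fun S => S j = T), g (S j)
      = ((((Fintype.piFinset t).filter (fun S => S j = T)).card : ℝ)) * g T := by
    rw [Finset.sum_congr rfl (fun S hS => by rw [(mem_filter.1 hS).2]), Finset.sum_const,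
      nsmul_eq_mul]
  rw [hsum, hfib, Fintype.card_piFinset]
  have : ∏ k, ((Function.update t j {T} k).card) =
      ∏ k ∈ Finset.univ.erase j, (t k).card := by
    rw [← Finset.mul_prod_erase Finset.univ _ (Finset.mem_univ j)]
    rw [Function.update_self, Finset.card_singleton, one_mul]
    exact Finset.prod_congr rfl fun k hk =>
      by rw [Function.update_of_ne (Finset.mem_erase.1 hk).1]
  rw [this]
  push_cast
  ring


section Mech
variable {J m : ℕ} (Jv : Fin m → ℕ)

def mechSet (J : ℕ) {m : ℕ} (Jv : Fin m → ℕ) : Finset (Fin J → Fin m) :=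
  Finset.univ.filter fun A => ∀ b, (Finset.univ.filter fun k => A k = b).card = Jv b

lemma comp_swap_mem_mechSet {A : Fin J → Fin m} (hA : A ∈ mechSet J Jv) (j j' : Fin J) :
    A ∘ (Equiv.swap j j') ∈ mechSet J Jv := by
  simp only [mechSet, mem_filter, mem_univ, true_and] at hA ⊢
  intro b
  rw [← hA b]
  refine Finset.card_nbij (Equiv.swap j j') ?_ ?_ ?_
  · intro k hk
    simp only [Finset.coe_filter, Set.mem_setOf_eq, mem_filter, mem_univ, true_and, Function.comp_apply] at hk ⊢
    exact hk
  · exact fun x _ y _ h => (Equiv.swap j j').injective h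
  · intro k hk
    simp only [Finset.coe_filter, Set.mem_setOf_eq, Set.mem_image, mem_univ, true_and,
      Function.comp_apply] at hk ⊢
    exact ⟨Equiv.swap j j' k, by rwa [Equiv.swap_apply_self], by rw [Equiv.swap_apply_self]⟩

lemma card_filter_eval_const (a : Fin m) (j j' : Fin J) :
    ((mechSet J Jv).filter fun A => A j = a).card
      = ((mechSet J Jv).filter fun A => A j' = a).card := by
  refine Finset.card_bij' (fun A _ => A ∘ Equiv.swap j j') (fun A _ => A ∘ Equiv.swap j j')
    ?_ ?_ ?_ ?_
  · intro A hA
    simp only [mem_filter] at hA ⊢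
    refine ⟨comp_swap_mem_mechSet Jv hA.1 j j', ?_⟩
    simp only [Function.comp_apply, Equiv.swap_apply_right]
    exact hA.2
  · intro A hA
    simp only [mem_filter] at hA ⊢
    refine ⟨comp_swap_mem_mechSet Jv hA.1 j j', ?_⟩
    simp only [Function.comp_apply, Equiv.swap_apply_left]
    exact hA.2
  · intro A _; funext k; simp [Equiv.swap_apply_self]
  · intro A _; funext k; simp [Equiv.swap_apply_self]

lemma card_filter_eval_mul (a : Fin m) (j : Fin J) :
    ((mechSet J Jv).filter fun A => A j = a).card * J
      = (mechSet J Jv).card * Jv a := by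
  have hdouble : ∑ j' : Fin J, ((mechSet J Jv).filter fun A => A j' = a).card
      = (mechSet J Jv).card * Jv a := by
    have h1 : ∀ j' : Fin J, ((mechSet J Jv).filter fun A => A j' = a).card
        = ∑ A ∈ mechSet J Jv, if A j' = a then 1 else 0 := fun j' => Finset.card_filter _ _
    simp only [h1]
    rw [Finset.sum_comm]
    have h2 : ∀ A ∈ mechSet J Jv, (∑ j' : Fin J, if A j' = a then 1 else 0) = Jv a := by
      intro A hA
      simp only [mechSet, mem_filter, mem_univ, true_and] at hA
      rw [← hA a, Finset.card_filter]
    rw [Finset.sum_congr rfl h2, Finset.sum_const, smul_eq_mul]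
  calc ((mechSet J Jv).filter fun A => A j = a).card * J
      = ∑ _j' : Fin J, ((mechSet J Jv).filter fun A => A j = a).card := by
        rw [Finset.sum_const, card_univ, Fintype.card_fin, smul_eq_mul, mul_comm]
    _ = ∑ j' : Fin J, ((mechSet J Jv).filter fun A => A j' = a).card :=
        Finset.sum_congr rfl fun j' _ => card_filter_eval_const Jv a j j'
    _ = (mechSet J Jv).card * Jv a := hdouble

lemma mechSet_nonempty (hsum : ∑ a, Jv a = J) : (mechSet J Jv).Nonempty := by
  have hcard : Fintype.card (Σ a, Fin (Jv a)) = Fintype.card (Fin J) := by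
    simp [Fintype.card_sigma, hsum]
  let e : (Σ a, Fin (Jv a)) ≃ Fin J := Fintype.equivOfCardEq hcard
  refine ⟨fun k => (e.symm k).1, ?_⟩
  simp only [mechSet, mem_filter, mem_univ, true_and]
  intro b
  have h1 : (Finset.univ.filter fun k : Fin J => (e.symm k).1 = b).card
      = (Finset.univ.filter fun x : Σ a, Fin (Jv a) => x.1 = b).card := by
    refine Finset.card_nbij e.symm ?_ ?_ ?_
    · intro k hk; simp only [Finset.coe_filter, Set.mem_setOf_eq, mem_filter, mem_univ, true_and] at hk ⊢; exact hk
    · exact fun x _ y _ h => e.symm.injective h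
    · intro x hx
      simp only [Finset.coe_filter, Set.mem_setOf_eq, Set.mem_image, mem_univ, true_and] at hx ⊢
      exact ⟨e x, by simpa using hx, by simp⟩
  rw [h1]
  have e2 : {x : Σ a, Fin (Jv a) // x.1 = b} ≃ Fin (Jv b) :=
    { toFun := fun x => x.2 ▸ x.1.2
      invFun := fun y => ⟨⟨b, y⟩, rfl⟩
      left_inv := by rintro ⟨⟨a', v⟩, h⟩; subst h; rfl
      right_inv := fun y => rfl }
  rw [← Fintype.card_subtype]
  rw [Fintype.card_congr e2, Fintype.card_fin]
end Mech

end Aux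

/-- **Unbiased estimation (Theorem 1, first part).** Under the two-stage randomized design,
for every treatment condition `z` and mechanism `a`, `E[Ŷ(z,a)] = Ȳ(z,a)`. -/
theorem hatY_unbiased (d : TwoStageDesign)
    (hJ : 2 ≤ d.J) (hn : ∀ j, 2 ≤ d.n j)
    (hJc : ∀ a, 1 ≤ d.Jc a) (hJsum : ∑ a, d.Jc a = d.J)
    (hn1lo : ∀ j a, 1 ≤ d.n1 j a) (hn1hi : ∀ j a, d.n1 j a ≤ d.n j - 1)
    (z : Bool) (a : Fin d.m) :
    d.expec (fun A S => d.hatY A S z a) = d.Ybar z a := by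
  classical
  have hJ0 : 0 < d.J := by omega
  have hMset : d.mechA = mechSet d.J d.Jc := rfl
  have htreat : ∀ A : Fin d.J → Fin d.m, d.treatA A
      = Fintype.piFinset
          (fun j => (Finset.univ : Finset (Fin (d.n j))).powersetCard (d.n1 j (A j))) := by
    intro A
    ext S
    simp [TwoStageDesign.treatA, Fintype.mem_piFinset, Finset.mem_powersetCard_univ]
  have htcardpos : ∀ A, 0 < (d.treatA A).card := by
    intro A
    rw [htreat A, Fintype.card_piFinset]
    apply Finset.prod_pos
    intro k _
    rw [Finset.card_powersetCard, Finset.card_univ, Fintype.card_fin]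
    exact Nat.choose_pos (by have := hn1hi k (A k); have := hn k; omega)
  have hMpos : 0 < d.mechA.card := by
    rw [hMset]; exact Finset.card_pos.2 (mechSet_nonempty d.Jc hJsum)
  -- inner expectation over the second stage
  have hinner : ∀ A : Fin d.J → Fin d.m,
      ∑ S ∈ d.treatA A, d.hatY A S z a
        = ((d.treatA A).card : ℝ) *
          ((∑ j ∈ Finset.univ.filter (fun j => A j = a), d.Ybarj j z a) / (d.Jc a : ℝ)) := by
    intro A
    have hstep : ∀ j ∈ Finset.univ.filter (fun j => A j = a),
        ∑ S ∈ d.treatA A, d.hatYj A S z j = ((d.treatA A).card : ℝ) * d.Ybarj j z a := by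
      intro j hj
      have hAj : A j = a := (Finset.mem_filter.1 hj).2
      set g : Finset (Fin (d.n j)) → ℝ := fun T =>
        (∑ i ∈ Finset.univ.filter (fun i => decide (i ∈ T) = z), d.Y j i z a) /
          ((Finset.univ.filter (fun i : Fin (d.n j) => decide (i ∈ T) = z)).card : ℝ) with hg
      have hYj : ∀ S ∈ d.treatA A, d.hatYj A S z j = g (S j) := by
        intro S _
        unfold TwoStageDesign.hatYj
        rw [hg]
        congr 1
        refine Finset.sum_congr rfl fun i hi => ?_
        have hiz : decide (i ∈ S j) = z := (Finset.mem_filter.1 hi).2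
        unfold TwoStageDesign.Yobs
        rw [hiz, hAj]
      have h1 : 1 ≤ d.n1 j (A j) := hn1lo j (A j)
      have h2 : d.n1 j (A j) + 1 ≤ d.n j := by have := hn1hi j (A j); have := hn j; omega
      have hfact : ∑ S ∈ d.treatA A, g (S j)
          = (∏ k ∈ Finset.univ.erase j,
              ((((Finset.univ : Finset (Fin (d.n k))).powersetCard (d.n1 k (A k))).card : ℝ)))
            * ∑ T ∈ (Finset.univ : Finset (Fin (d.n j))).powersetCard (d.n1 j (A j)), g T := by
        rw [htreat A]
        exact sum_piFinset_eval (fun k => (Finset.univ : Finset (Fin (d.n k))).powersetCard (d.n1 k (A k))) j g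
      have havg : ∑ T ∈ (Finset.univ : Finset (Fin (d.n j))).powersetCard (d.n1 j (A j)), g T
          = ((d.n j).choose (d.n1 j (A j)) : ℝ) * ((∑ i, d.Y j i z a) / (d.n j : ℝ)) :=
        avg_filter_decide h1 h2 z (fun i => d.Y j i z a)
      have hcard : ((d.treatA A).card : ℝ)
          = ((d.n j).choose (d.n1 j (A j)) : ℝ)
            * ∏ k ∈ Finset.univ.erase j,
                ((((Finset.univ : Finset (Fin (d.n k))).powersetCard (d.n1 k (A k))).card : ℝ)) := by
        rw [htreat A, Fintype.card_piFinset]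
        push_cast
        rw [← Finset.mul_prod_erase Finset.univ _ (Finset.mem_univ j)]
        congr 1
        rw [Finset.card_powersetCard, Finset.card_univ, Fintype.card_fin]
      rw [Finset.sum_congr rfl hYj, hfact, havg, hcard]
      unfold TwoStageDesign.Ybarj
      ring
    unfold TwoStageDesign.hatY
    calc ∑ S ∈ d.treatA A,
          (∑ j ∈ Finset.univ.filter (fun j => A j = a), d.hatYj A S z j) / (d.Jc a : ℝ)
        = (∑ j ∈ Finset.univ.filter (fun j => A j = a),
            ∑ S ∈ d.treatA A, d.hatYj A S z j) / (d.Jc a : ℝ) := by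
          rw [← Finset.sum_div, Finset.sum_comm]
      _ = (∑ j ∈ Finset.univ.filter (fun j => A j = a),
            ((d.treatA A).card : ℝ) * d.Ybarj j z a) / (d.Jc a : ℝ) := by
          rw [Finset.sum_congr rfl hstep]
      _ = ((d.treatA A).card : ℝ) *
          ((∑ j ∈ Finset.univ.filter (fun j => A j = a), d.Ybarj j z a) / (d.Jc a : ℝ)) := by
          rw [← Finset.mul_sum]; ring
  unfold TwoStageDesign.expec
  have houter : ∀ A ∈ d.mechA,
      ∑ S ∈ d.treatA A, d.hatY A S z a / ((d.mechA.card : ℝ) * ((d.treatA A).card : ℝ))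
        = (∑ j ∈ Finset.univ.filter (fun j => A j = a), d.Ybarj j z a)
            / ((d.Jc a : ℝ) * (d.mechA.card : ℝ)) := by
    intro A _
    rw [← Finset.sum_div, hinner A]
    have hc2 : (((d.treatA A).card : ℕ) : ℝ) ≠ 0 := by exact_mod_cast (htcardpos A).ne'
    rw [mul_comm ((d.mechA.card : ℕ) : ℝ) (((d.treatA A).card : ℕ) : ℝ),
      mul_div_mul_left _ _ hc2, div_div]
  rw [Finset.sum_congr rfl houter]
  have hswap : ∑ A ∈ d.mechA, ∑ j ∈ Finset.univ.filter (fun j => A j = a), d.Ybarj j z a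
      = ∑ j : Fin d.J, ((d.mechA.filter fun A => A j = a).card : ℝ) * d.Ybarj j z a := by
    have h1 : ∀ A ∈ d.mechA,
        ∑ j ∈ Finset.univ.filter (fun j => A j = a), d.Ybarj j z a
          = ∑ j : Fin d.J, if A j = a then d.Ybarj j z a else 0 := fun A _ =>
      Finset.sum_filter _ _
    rw [Finset.sum_congr rfl h1, Finset.sum_comm]
    refine Finset.sum_congr rfl fun j _ => ?_
    rw [← Finset.sum_filter, Finset.sum_const, nsmul_eq_mul]
  have hdivsum : ∀ A ∈ d.mechA,
      (∑ j ∈ Finset.univ.filter (fun j => A j = a), d.Ybarj j z a)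
          / ((d.Jc a : ℝ) * (d.mechA.card : ℝ))
        = (fun A => (∑ j ∈ Finset.univ.filter (fun j => A j = a), d.Ybarj j z a)) A
          / ((d.Jc a : ℝ) * (d.mechA.card : ℝ)) := fun A _ => rfl
  rw [Finset.sum_congr rfl hdivsum, ← Finset.sum_div, hswap]
  have hcount : ∀ j : Fin d.J,
      ((d.mechA.filter fun A => A j = a).card : ℝ) * (d.J : ℝ)
        = (d.mechA.card : ℝ) * (d.Jc a : ℝ) := by
    intro j
    rw [hMset]
    exact_mod_cast card_filter_eval_mul d.Jc a j
  have hc : ∀ j : Fin d.J, ((d.mechA.filter fun A => A j = a).card : ℝ)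
      = (d.mechA.card : ℝ) * (d.Jc a : ℝ) / (d.J : ℝ) := by
    intro j
    have hJne : (d.J : ℝ) ≠ 0 := by exact_mod_cast hJ0.ne'
    field_simp
    exact hcount j
  rw [Finset.sum_congr rfl (fun j _ => by rw [hc j])]
  rw [← Finset.mul_sum]
  unfold TwoStageDesign.Ybar
  have hJne : (d.J : ℝ) ≠ 0 := by exact_mod_cast hJ0.ne'
  have hJcne : ((d.Jc a : ℝ)) ≠ 0 := by
    have h0 : 0 < d.Jc a := lt_of_lt_of_le one_pos (hJc a)
    exact_mod_cast h0.ne'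
  have hMne : ((d.mechA.card : ℝ)) ≠ 0 := by exact_mod_cast hMpos.ne'
  field_simp
end
end

section
/- Under the two-stage randomized design, the plug-in estimators of the average direct effect, the average marginal direct effect, and the average spillover effect are unbiased: for every mechanism a, E[Ŷ(1,a) − Ŷ(0,a)] = ADE(a); E[Σ_a (J_a/J){Ŷ(1,a) − Ŷ(0,a)}] = MDE; and for every z ∈ {0,1} and every pair of mechanisms a ≠ a', E[Ŷ(z,a) − Ŷ(z,a')] = ASE(z;a,a'). -/
/-!
Two-stage randomized experiments (Jiang & Imai).
STATEMENT 0: Unbiasedness of Ŷ(z,a): E[Ŷ(z,a)] = Ȳ(z,a).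
-/

open scoped BigOperators

noncomputable section

namespace TwoStageDesign

variable (d : TwoStageDesign)

/-- `σ_j²(z,z';a,a')`: within-cluster covariance of the potential outcomes. -/
def sigU (j : Fin d.J) (z z' : Bool) (a a' : Fin d.m) : ℝ :=
  (∑ i, (d.Y j i z a - d.Ybarj j z a) * (d.Y j i z' a' - d.Ybarj j z' a')) /
    ((d.n j : ℝ) - 1)

/-- `σ_b²(z,z';a,a')`: between-cluster covariance of the cluster averages. -/
def sigB (z z' : Bool) (a a' : Fin d.m) : ℝ :=
  (∑ j, (d.Ybarj j z a - d.Ybar z a) * (d.Ybarj j z' a' - d.Ybar z' a')) /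
    ((d.J : ℝ) - 1)

/-- `σ̂_b²(z,z';a)`: between-cluster sample covariance among clusters with `A_j = a`. -/
def sigBhat (A : Fin d.J → Fin d.m) (S : (j : Fin d.J) → Finset (Fin (d.n j)))
    (z z' : Bool) (a : Fin d.m) : ℝ :=
  (∑ j ∈ Finset.univ.filter (fun j => A j = a),
      (d.hatYj A S z j - d.hatY A S z a) * (d.hatYj A S z' j - d.hatY A S z' a)) /
    ((d.Jc a : ℝ) - 1)

end TwoStageDesign


/-! ### Auxiliary lemmas -/

section Aux

open Finset

/-- The number of `k`-subsets containing a fixed element does not depend on the element. -/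
lemma card_mem_powersetCard_eq {n k : ℕ} (i i' : Fin n) :
    ((Finset.powersetCard k (Finset.univ : Finset (Fin n))).filter fun T => i ∈ T).card =
    ((Finset.powersetCard k (Finset.univ : Finset (Fin n))).filter fun T => i' ∈ T).card := by
  have hmap : ∀ T : Finset (Fin n),
      (T.map (Equiv.swap i i').toEmbedding).map (Equiv.swap i i').toEmbedding = T := by
    intro T
    rw [Finset.map_map]
    have : (Equiv.swap i i').toEmbedding.trans (Equiv.swap i i').toEmbedding =
        (Function.Embedding.refl _) := by
      ext x; simp [Equiv.swap_apply_self]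
    rw [this, Finset.map_refl]
  apply Finset.card_nbij' (fun T => T.map (Equiv.swap i i').toEmbedding)
      (fun T => T.map (Equiv.swap i i').toEmbedding)
  · intro T hT
    simp only [Finset.mem_coe, Finset.mem_filter, Finset.mem_powersetCard_univ] at hT ⊢
    refine ⟨by simp [hT.1], ?_⟩
    rw [Finset.mem_map_equiv]
    simpa [Equiv.swap_apply_right] using hT.2
  · intro T hT
    simp only [Finset.mem_coe, Finset.mem_filter, Finset.mem_powersetCard_univ] at hT ⊢
    refine ⟨by simp [hT.1], ?_⟩
    rw [Finset.mem_map_equiv]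
    simpa [Equiv.swap_apply_left] using hT.2
  · intro T _; exact hmap T
  · intro T _; exact hmap T

/-- `n * #{T : |T|=k, i ∈ T} = k * #{T : |T| = k}`. -/
lemma n_mul_card_mem {n k : ℕ} (i : Fin n) :
    n * ((Finset.powersetCard k (Finset.univ : Finset (Fin n))).filter
        fun T => i ∈ T).card =
      k * (Finset.powersetCard k (Finset.univ : Finset (Fin n))).card := by
  set P := Finset.powersetCard k (Finset.univ : Finset (Fin n)) with hP
  have hsum : ∑ i' : Fin n, (P.filter fun T => i' ∈ T).card = k * P.card := by
    have h1 : ∀ i' : Fin n, (P.filter fun T => i' ∈ T).card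
        = ∑ T ∈ P, if i' ∈ T then 1 else 0 := by
      intro i'; exact Finset.card_filter _ _
    calc ∑ i' : Fin n, (P.filter fun T => i' ∈ T).card
        = ∑ i' : Fin n, ∑ T ∈ P, if i' ∈ T then 1 else 0 :=
          Finset.sum_congr rfl fun i' _ => h1 i'
      _ = ∑ T ∈ P, ∑ i' : Fin n, if i' ∈ T then 1 else 0 := Finset.sum_comm
      _ = ∑ T ∈ P, T.card := by
          refine Finset.sum_congr rfl fun T _ => ?_
          rw [← Finset.card_filter]
          congr 1
          exact Finset.filter_univ_mem T
      _ = ∑ _T ∈ P, k := Finset.sum_congr rfl fun T hT =>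
          Finset.mem_powersetCard_univ.1 hT
      _ = k * P.card := by rw [Finset.sum_const, smul_eq_mul, mul_comm]
  calc n * (P.filter fun T => i ∈ T).card
      = ∑ _i' : Fin n, (P.filter fun T => i ∈ T).card := by
        rw [Finset.sum_const, Finset.card_univ, Fintype.card_fin, smul_eq_mul]
    _ = ∑ i' : Fin n, (P.filter fun T => i' ∈ T).card :=
        Finset.sum_congr rfl fun i' _ => card_mem_powersetCard_eq i i'
    _ = k * P.card := hsum

/-- `n * #{T : |T|=k, z-condition at i} = c * #P` with `c = k` or `n - k`. -/
lemma n_mul_card_cond {n k : ℕ} (i : Fin n) (z : Bool) :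
    n * ((Finset.powersetCard k (Finset.univ : Finset (Fin n))).filter
        fun T => decide (i ∈ T) = z).card =
      (if z then k else n - k) *
        (Finset.powersetCard k (Finset.univ : Finset (Fin n))).card := by
  set P := Finset.powersetCard k (Finset.univ : Finset (Fin n)) with hP
  cases z with
  | true =>
    have heq : (P.filter fun T => decide (i ∈ T) = true)
        = P.filter fun T => i ∈ T := by
      apply Finset.filter_congr; intro T _; simp
    rw [heq, if_pos rfl]
    exact n_mul_card_mem i
  | false =>
    have hsplit : (P.filter fun T => i ∈ T).card +
        (P.filter fun T => ¬ i ∈ T).card = P.card :=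
      Finset.card_filter_add_card_filter_not _
    have heq : (P.filter fun T => decide (i ∈ T) = false)
        = P.filter fun T => ¬ i ∈ T := by
      apply Finset.filter_congr; intro T _; simp
    rw [heq]
    have h1 : n * (P.filter fun T => i ∈ T).card = k * P.card := n_mul_card_mem i
    simp only [if_neg Bool.false_ne_true]
    have hc : (P.filter fun T => ¬ i ∈ T).card
        = P.card - (P.filter fun T => i ∈ T).card := by omega
    rw [hc, Nat.mul_sub, h1, ← Nat.sub_mul]

/-- Averaging the within-cluster mean over all `k`-subsets gives the full mean. -/
lemma sum_powersetCard_avg {n k : ℕ} (hk1 : 1 ≤ k) (hk2 : k + 1 ≤ n)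
    (f : Fin n → ℝ) (z : Bool) :
    ∑ T ∈ Finset.powersetCard k (Finset.univ : Finset (Fin n)),
      (∑ i ∈ Finset.univ.filter (fun i => decide (i ∈ T) = z), f i) /
        ((Finset.univ.filter fun i : Fin n => decide (i ∈ T) = z).card : ℝ) =
    ((Finset.powersetCard k (Finset.univ : Finset (Fin n))).card : ℝ) *
      ((∑ i, f i) / (n : ℝ)) := by
  classical
  set P := Finset.powersetCard k (Finset.univ : Finset (Fin n)) with hP
  set c : ℕ := if z then k else n - k with hc
  have hcpos : 0 < c := by cases z <;> simp [hc] <;> omega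
  have hnpos : 0 < n := by omega
  have hden : ∀ T ∈ P,
      (Finset.univ.filter fun i : Fin n => decide (i ∈ T) = z).card = c := by
    intro T hT
    have hTc : T.card = k := Finset.mem_powersetCard_univ.1 hT
    cases z with
    | true =>
      have : (Finset.univ.filter fun i : Fin n => decide (i ∈ T) = true) = T := by
        ext i; simp
      rw [this, hTc]; simp [hc]
    | false =>
      have : (Finset.univ.filter fun i : Fin n => decide (i ∈ T) = false) = Tᶜ := by
        ext i; simp
      rw [this, Finset.card_compl, hTc]; simp [hc]
  have hswap : ∑ T ∈ P, ∑ i ∈ Finset.univ.filter (fun i => decide (i ∈ T) = z), f i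
      = ∑ i : Fin n, ((P.filter fun T => decide (i ∈ T) = z).card : ℝ) * f i := by
    calc ∑ T ∈ P, ∑ i ∈ Finset.univ.filter (fun i => decide (i ∈ T) = z), f i
        = ∑ T ∈ P, ∑ i : Fin n, if decide (i ∈ T) = z then f i else 0 :=
          Finset.sum_congr rfl fun T _ => Finset.sum_filter _ _
      _ = ∑ i : Fin n, ∑ T ∈ P, if decide (i ∈ T) = z then f i else 0 := Finset.sum_comm
      _ = ∑ i : Fin n, ((P.filter fun T => decide (i ∈ T) = z).card : ℝ) * f i := by
          refine Finset.sum_congr rfl fun i _ => ?_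
          rw [← Finset.sum_filter, Finset.sum_const, nsmul_eq_mul]
  have hcount : ∀ i : Fin n, ((P.filter fun T => decide (i ∈ T) = z).card : ℝ)
      = (c : ℝ) * (P.card : ℝ) / (n : ℝ) := by
    intro i
    have := n_mul_card_cond (k := k) i z
    rw [eq_div_iff (by positivity : (n : ℝ) ≠ 0)]
    rw [← hc] at this
    rw [mul_comm]
    exact_mod_cast this
  calc ∑ T ∈ P, (∑ i ∈ Finset.univ.filter (fun i => decide (i ∈ T) = z), f i) /
        ((Finset.univ.filter fun i : Fin n => decide (i ∈ T) = z).card : ℝ)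
      = ∑ T ∈ P, (∑ i ∈ Finset.univ.filter (fun i => decide (i ∈ T) = z), f i) / (c : ℝ) :=
        Finset.sum_congr rfl fun T hT => by rw [hden T hT]
    _ = (∑ T ∈ P, ∑ i ∈ Finset.univ.filter (fun i => decide (i ∈ T) = z), f i) / (c : ℝ) := by
        rw [Finset.sum_div]
    _ = (∑ i : Fin n, ((c : ℝ) * (P.card : ℝ) / (n : ℝ)) * f i) / (c : ℝ) := by
        rw [hswap]
        congr 1
        exact Finset.sum_congr rfl fun i _ => by rw [hcount i]
    _ = ((P.card : ℝ) * ((∑ i, f i) / (n : ℝ))) := by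
        rw [← Finset.mul_sum]
        rw [div_eq_iff (Nat.cast_ne_zero.2 hcpos.ne')]
        ring

/-- Summing a function of a single coordinate over a product of finsets. -/
lemma sum_piFinset_coord {J : ℕ} {γ : Fin J → Type*} [∀ j, DecidableEq (γ j)]
    (t : ∀ j, Finset (γ j)) (j : Fin J) (g : γ j → ℝ) :
    ∑ S ∈ Fintype.piFinset t, g (S j) =
      (∏ k ∈ Finset.univ.erase j, ((t k).card : ℝ)) * ∑ x ∈ t j, g x := by
  classical
  have key := Finset.prod_univ_sum t
    (fun k x => if h : k = j then g (h ▸ x) else 1)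
  have hlhs : ∏ k, ∑ x ∈ t k, (if h : k = j then g (h ▸ x) else 1)
      = (∑ x ∈ t j, g x) * ∏ k ∈ Finset.univ.erase j, ((t k).card : ℝ) := by
    rw [← Finset.mul_prod_erase Finset.univ _ (Finset.mem_univ j)]
    congr 1
    · refine Finset.sum_congr rfl fun x _ => ?_
      rw [dif_pos rfl]
    · refine Finset.prod_congr rfl fun k hk => ?_
      have hkj : k ≠ j := (Finset.mem_erase.1 hk).1
      calc ∑ x ∈ t k, (if h : k = j then g (h ▸ x) else 1)
          = ∑ _x ∈ t k, (1 : ℝ) :=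
            Finset.sum_congr rfl fun x _ => by rw [dif_neg hkj]
        _ = ((t k).card : ℝ) := by rw [Finset.sum_const, nsmul_eq_mul, mul_one]
  have hrhs : ∀ S ∈ Fintype.piFinset t,
      (∏ k, if h : k = j then g (h ▸ S k) else 1) = g (S j) := by
    intro S _
    rw [← Finset.mul_prod_erase Finset.univ _ (Finset.mem_univ j), dif_pos rfl]
    have : ∏ k ∈ Finset.univ.erase j, (if h : k = j then g (h ▸ S k) else 1) = 1 :=
      Finset.prod_eq_one fun k hk => by rw [dif_neg (Finset.mem_erase.1 hk).1]
    rw [this, mul_one]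
  rw [hlhs] at key
  rw [← Finset.sum_congr rfl hrhs, ← key, mul_comm]

/-- Counting in a family of assignments invariant under permutations of clusters. -/
lemma card_fiber_filter_mul {J m : ℕ} (𝒜 : Finset (Fin J → Fin m)) (a : Fin m) (c : ℕ)
    (hinv : ∀ A ∈ 𝒜, ∀ σ : Equiv.Perm (Fin J), (fun k => A (σ k)) ∈ 𝒜)
    (hfib : ∀ A ∈ 𝒜, (Finset.univ.filter fun j => A j = a).card = c) (j : Fin J) :
    J * (𝒜.filter fun A => A j = a).card = c * 𝒜.card := by
  classical
  have hsym : ∀ j' : Fin J,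
      (𝒜.filter fun A => A j = a).card = (𝒜.filter fun A => A j' = a).card := by
    intro j'
    apply Finset.card_nbij' (fun A => fun k => A (Equiv.swap j j' k))
        (fun A => fun k => A (Equiv.swap j j' k))
    · intro A hA
      have h1 := Finset.mem_filter.1 hA
      refine Finset.mem_filter.2 ⟨hinv A h1.1 (Equiv.swap j j'), ?_⟩
      simpa [Equiv.swap_apply_right] using h1.2
    · intro A hA
      have h1 := Finset.mem_filter.1 hA
      refine Finset.mem_filter.2 ⟨hinv A h1.1 (Equiv.swap j j'), ?_⟩
      simpa [Equiv.swap_apply_left] using h1.2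
    · intro A _; funext k; simp [Equiv.swap_apply_self]
    · intro A _; funext k; simp [Equiv.swap_apply_self]
  have hsum : ∑ j' : Fin J, (𝒜.filter fun A => A j' = a).card = c * 𝒜.card := by
    calc ∑ j' : Fin J, (𝒜.filter fun A => A j' = a).card
        = ∑ j' : Fin J, ∑ A ∈ 𝒜, if A j' = a then 1 else 0 :=
          Finset.sum_congr rfl fun j' _ => Finset.card_filter _ _
      _ = ∑ A ∈ 𝒜, ∑ j' : Fin J, if A j' = a then 1 else 0 := Finset.sum_comm
      _ = ∑ A ∈ 𝒜, (Finset.univ.filter fun j' => A j' = a).card :=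
          Finset.sum_congr rfl fun A _ => (Finset.card_filter _ _).symm
      _ = ∑ _A ∈ 𝒜, c := Finset.sum_congr rfl fun A hA => hfib A hA
      _ = c * 𝒜.card := by rw [Finset.sum_const, smul_eq_mul, mul_comm]
  calc J * (𝒜.filter fun A => A j = a).card
      = ∑ _j' : Fin J, (𝒜.filter fun A => A j = a).card := by
        rw [Finset.sum_const, Finset.card_univ, Fintype.card_fin, smul_eq_mul]
    _ = ∑ j' : Fin J, (𝒜.filter fun A => A j' = a).card :=
        Finset.sum_congr rfl fun j' _ => hsym j'
    _ = c * 𝒜.card := hsum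

end Aux

namespace TwoStageDesign

open Finset

variable (d : TwoStageDesign)

lemma mechA_inv (A : Fin d.J → Fin d.m) (hA : A ∈ d.mechA) (σ : Equiv.Perm (Fin d.J)) :
    (fun k => A (σ k)) ∈ d.mechA := by
  have h := (Finset.mem_filter.1 hA).2
  refine Finset.mem_filter.2 ⟨Finset.mem_univ _, fun a => ?_⟩
  have : (Finset.univ.filter fun j => A (σ j) = a).card
      = (Finset.univ.filter fun j => A j = a).card := by
    apply Finset.card_nbij' σ σ.symm <;> simp [Set.MapsTo, Set.LeftInvOn, Set.RightInvOn]
  rw [this]; exact h a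

lemma mechA_fiber (A : Fin d.J → Fin d.m) (hA : A ∈ d.mechA) (a : Fin d.m) :
    (Finset.univ.filter fun j => A j = a).card = d.Jc a :=
  (Finset.mem_filter.1 hA).2 a

lemma mechA_nonempty (hJsum : ∑ a, d.Jc a = d.J) : d.mechA.Nonempty := by
  classical
  have hcard : Fintype.card (Σ a : Fin d.m, Fin (d.Jc a)) = Fintype.card (Fin d.J) := by
    simp [hJsum]
  let e := Fintype.equivOfCardEq hcard
  refine ⟨fun j => (e.symm j).1, Finset.mem_filter.2 ⟨Finset.mem_univ _, fun a => ?_⟩⟩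
  have h1 : (Finset.univ.filter fun j : Fin d.J => (e.symm j).1 = a).card
      = (Finset.univ.filter fun p : Σ b : Fin d.m, Fin (d.Jc b) => p.1 = a).card := by
    apply Finset.card_nbij' (fun j => e.symm j) (fun p => e p) <;> simp [Set.MapsTo, Set.LeftInvOn, Set.RightInvOn]
  rw [h1]
  have h2 : (Finset.univ.filter fun p : Σ b : Fin d.m, Fin (d.Jc b) => p.1 = a)
      = ({a} : Finset (Fin d.m)).sigma fun _ => Finset.univ := by
    ext ⟨b, x⟩; simp [Finset.mem_sigma]
  rw [h2, Finset.card_sigma]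
  simp

lemma treatA_eq_piFinset (A : Fin d.J → Fin d.m) :
    d.treatA A
      = Fintype.piFinset fun j => Finset.powersetCard (d.n1 j (A j)) Finset.univ := by
  ext S
  simp [treatA, Fintype.mem_piFinset, Finset.mem_powersetCard_univ]

lemma treatA_nonempty (hn : ∀ j, 2 ≤ d.n j) (hn1hi : ∀ j a, d.n1 j a ≤ d.n j - 1)
    (A : Fin d.J → Fin d.m) : (d.treatA A).Nonempty := by
  rw [treatA_eq_piFinset, Fintype.piFinset_nonempty]
  intro j
  rw [Finset.powersetCard_nonempty]
  have := hn1hi j (A j)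
  have := hn j
  simp only [Finset.card_univ, Fintype.card_fin]
  omega

/-- Second-stage unbiasedness: for a fixed first-stage assignment, the sum of
`Ŷ_j(z)` over all admissible second-stage assignments equals `#(treatA A) · Ȳ_j(z, A_j)`. -/
lemma sum_treatA_hatYj (hn : ∀ j, 2 ≤ d.n j)
    (hn1lo : ∀ j a, 1 ≤ d.n1 j a) (hn1hi : ∀ j a, d.n1 j a ≤ d.n j - 1)
    (A : Fin d.J → Fin d.m) (z : Bool) (j : Fin d.J) :
    ∑ S ∈ d.treatA A, d.hatYj A S z j
      = ((d.treatA A).card : ℝ) * d.Ybarj j z (A j) := by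
  classical
  have hrepr : ∀ S : (j : Fin d.J) → Finset (Fin (d.n j)), d.hatYj A S z j =
      (∑ i ∈ Finset.univ.filter (fun i => decide (i ∈ S j) = z), d.Y j i z (A j)) /
        ((Finset.univ.filter fun i : Fin (d.n j) => decide (i ∈ S j) = z).card : ℝ) := by
    intro S
    unfold hatYj Yobs
    congr 1
    refine Finset.sum_congr rfl fun i hi => ?_
    rw [(Finset.mem_filter.1 hi).2]
  rw [Finset.sum_congr rfl fun S _ => hrepr S, treatA_eq_piFinset]
  refine (sum_piFinset_coord (γ := fun k => Finset (Fin (d.n k)))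
      (fun k => Finset.powersetCard (d.n1 k (A k)) Finset.univ) j
      (fun T => (∑ i ∈ Finset.univ.filter (fun i => decide (i ∈ T) = z), d.Y j i z (A j)) /
        ((Finset.univ.filter fun i : Fin (d.n j) => decide (i ∈ T) = z).card : ℝ))).trans ?_
  calc (∏ k ∈ Finset.univ.erase j,
            ((Finset.powersetCard (d.n1 k (A k))
              (Finset.univ : Finset (Fin (d.n k)))).card : ℝ)) *
          ∑ T ∈ Finset.powersetCard (d.n1 j (A j)) Finset.univ,
            (∑ i ∈ Finset.univ.filter (fun i => decide (i ∈ T) = z), d.Y j i z (A j)) /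
              ((Finset.univ.filter fun i : Fin (d.n j) => decide (i ∈ T) = z).card : ℝ)
      = ((Fintype.piFinset fun k =>
            Finset.powersetCard (d.n1 k (A k)) Finset.univ).card : ℝ) *
          d.Ybarj j z (A j) := by
        rw [sum_powersetCard_avg (hn1lo j (A j))
          (by have := hn1hi j (A j); have := hn j; omega)]
        rw [Fintype.card_piFinset]
        push_cast
        rw [← Finset.mul_prod_erase Finset.univ
          (fun k => ((Finset.powersetCard (d.n1 k (A k))
            (Finset.univ : Finset (Fin (d.n k)))).card : ℝ))
          (Finset.mem_univ j)]
        unfold Ybarj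
        ring

/-- Unbiasedness of `Ŷ(z,a)`. -/
lemma expec_hatY (hJ : 2 ≤ d.J) (hn : ∀ j, 2 ≤ d.n j)
    (hJc : ∀ a, 1 ≤ d.Jc a) (hJsum : ∑ a, d.Jc a = d.J)
    (hn1lo : ∀ j a, 1 ≤ d.n1 j a) (hn1hi : ∀ j a, d.n1 j a ≤ d.n j - 1)
    (z : Bool) (a : Fin d.m) :
    d.expec (fun A S => d.hatY A S z a) = d.Ybar z a := by
  classical
  have hM : 0 < d.mechA.card := (d.mechA_nonempty hJsum).card_pos
  have hT : ∀ A, 0 < (d.treatA A).card :=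
    fun A => (d.treatA_nonempty hn hn1hi A).card_pos
  have hJpos : 0 < d.J := by omega
  have hJca : 0 < d.Jc a := hJc a
  have hMne : (d.mechA.card : ℝ) ≠ 0 := by positivity
  have hJcane : (d.Jc a : ℝ) ≠ 0 := by exact_mod_cast hJca.ne'
  have hJne : (d.J : ℝ) ≠ 0 := by positivity
  unfold expec
  have hstep : ∀ A ∈ d.mechA,
      ∑ S ∈ d.treatA A,
          d.hatY A S z a / ((d.mechA.card : ℝ) * ((d.treatA A).card : ℝ))
        = (∑ j ∈ Finset.univ.filter fun j => A j = a, d.Ybarj j z a) /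
            ((d.Jc a : ℝ) * (d.mechA.card : ℝ)) := by
    intro A hA
    have hTne : ((d.treatA A).card : ℝ) ≠ 0 := by
      have := hT A; positivity
    have h1 : ∑ S ∈ d.treatA A, d.hatY A S z a
        = ((d.treatA A).card : ℝ) *
            (∑ j ∈ Finset.univ.filter fun j => A j = a, d.Ybarj j z a) / (d.Jc a : ℝ) := by
      unfold hatY
      rw [← Finset.sum_div]
      congr 1
      rw [Finset.sum_comm]
      calc ∑ j ∈ Finset.univ.filter fun j => A j = a, ∑ S ∈ d.treatA A, d.hatYj A S z j
          = ∑ j ∈ Finset.univ.filter fun j => A j = a,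
              ((d.treatA A).card : ℝ) * d.Ybarj j z a := by
            refine Finset.sum_congr rfl fun j hj => ?_
            rw [d.sum_treatA_hatYj hn hn1lo hn1hi A z j, (Finset.mem_filter.1 hj).2]
        _ = ((d.treatA A).card : ℝ) *
              ∑ j ∈ Finset.univ.filter fun j => A j = a, d.Ybarj j z a :=
            (Finset.mul_sum _ _ _).symm
    rw [← Finset.sum_div, h1]
    field_simp
  rw [Finset.sum_congr rfl hstep, ← Finset.sum_div]
  have hcnt : ∑ A ∈ d.mechA, ∑ j ∈ Finset.univ.filter fun j => A j = a, d.Ybarj j z a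
      = ((d.Jc a : ℝ) * (d.mechA.card : ℝ) / (d.J : ℝ)) * ∑ j, d.Ybarj j z a := by
    calc ∑ A ∈ d.mechA, ∑ j ∈ Finset.univ.filter fun j => A j = a, d.Ybarj j z a
        = ∑ A ∈ d.mechA, ∑ j : Fin d.J, if A j = a then d.Ybarj j z a else 0 :=
          Finset.sum_congr rfl fun A _ => Finset.sum_filter _ _
      _ = ∑ j : Fin d.J, ∑ A ∈ d.mechA, if A j = a then d.Ybarj j z a else 0 :=
          Finset.sum_comm
      _ = ∑ j : Fin d.J,
            ((d.mechA.filter fun A => A j = a).card : ℝ) * d.Ybarj j z a := by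
          refine Finset.sum_congr rfl fun j _ => ?_
          rw [← Finset.sum_filter, Finset.sum_const, nsmul_eq_mul]
      _ = ∑ j : Fin d.J,
            ((d.Jc a : ℝ) * (d.mechA.card : ℝ) / (d.J : ℝ)) * d.Ybarj j z a := by
          refine Finset.sum_congr rfl fun j _ => ?_
          congr 1
          have := card_fiber_filter_mul d.mechA a (d.Jc a)
            (fun A hA σ => d.mechA_inv A hA σ) (fun A hA => d.mechA_fiber A hA a) j
          rw [eq_div_iff hJne, mul_comm _ (d.J : ℝ)]
          exact_mod_cast this
      _ = ((d.Jc a : ℝ) * (d.mechA.card : ℝ) / (d.J : ℝ)) * ∑ j, d.Ybarj j z a :=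
          (Finset.mul_sum _ _ _).symm
  rw [hcnt]
  unfold Ybar
  field_simp

/-- Linearity of the design expectation: differences. -/
lemma expec_sub (f g : (Fin d.J → Fin d.m) → ((j : Fin d.J) → Finset (Fin (d.n j))) → ℝ) :
    d.expec (fun A S => f A S - g A S) = d.expec f - d.expec g := by
  simp only [expec, sub_div, Finset.sum_sub_distrib]

/-- Linearity of the design expectation: finite sums. -/
lemma expec_finset_sum {ι : Type*} (s : Finset ι)
    (F : ι → (Fin d.J → Fin d.m) → ((j : Fin d.J) → Finset (Fin (d.n j))) → ℝ) :
    d.expec (fun A S => ∑ x ∈ s, F x A S) = ∑ x ∈ s, d.expec (F x) := by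
  simp only [expec, Finset.sum_div]
  calc ∑ A ∈ d.mechA, ∑ S ∈ d.treatA A, ∑ x ∈ s,
        F x A S / ((d.mechA.card : ℝ) * ((d.treatA A).card : ℝ))
      = ∑ A ∈ d.mechA, ∑ x ∈ s, ∑ S ∈ d.treatA A,
          F x A S / ((d.mechA.card : ℝ) * ((d.treatA A).card : ℝ)) :=
        Finset.sum_congr rfl fun A _ => Finset.sum_comm
    _ = ∑ x ∈ s, ∑ A ∈ d.mechA, ∑ S ∈ d.treatA A,
          F x A S / ((d.mechA.card : ℝ) * ((d.treatA A).card : ℝ)) := Finset.sum_comm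

/-- Linearity of the design expectation: scalar multiples. -/
lemma expec_const_mul (c : ℝ)
    (f : (Fin d.J → Fin d.m) → ((j : Fin d.J) → Finset (Fin (d.n j))) → ℝ) :
    d.expec (fun A S => c * f A S) = c * d.expec f := by
  simp only [expec, Finset.mul_sum, mul_div_assoc]

end TwoStageDesign

/-- **Unbiased estimation of the direct, marginal direct, and spillover effects
(Theorem 1).** Under the two-stage randomized design:
`E[Ŷ(1,a) − Ŷ(0,a)] = ADE(a)` for every `a`;
`E[∑_a (J_a/J)(Ŷ(1,a) − Ŷ(0,a))] = MDE`; and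
`E[Ŷ(z,a) − Ŷ(z,a')] = ASE(z;a,a')` for every `z` and `a ≠ a'`. -/
theorem effects_unbiased (d : TwoStageDesign)
    (hJ : 2 ≤ d.J) (hn : ∀ j, 2 ≤ d.n j)
    (hJc : ∀ a, 1 ≤ d.Jc a) (hJsum : ∑ a, d.Jc a = d.J)
    (hn1lo : ∀ j a, 1 ≤ d.n1 j a) (hn1hi : ∀ j a, d.n1 j a ≤ d.n j - 1) :
    (∀ a : Fin d.m,
        d.expec (fun A S => d.hatY A S true a - d.hatY A S false a) =
          d.Ybar true a - d.Ybar false a) ∧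
    (d.expec (fun A S =>
          ∑ a, ((d.Jc a : ℝ) / (d.J : ℝ)) * (d.hatY A S true a - d.hatY A S false a)) =
        ∑ a, ((d.Jc a : ℝ) / (d.J : ℝ)) * (d.Ybar true a - d.Ybar false a)) ∧
    (∀ (z : Bool) (a a' : Fin d.m), a ≠ a' →
        d.expec (fun A S => d.hatY A S z a - d.hatY A S z a') =
          d.Ybar z a - d.Ybar z a') := by
  have key : ∀ (z : Bool) (a : Fin d.m),
      d.expec (fun A S => d.hatY A S z a) = d.Ybar z a :=
    fun z a => d.expec_hatY hJ hn hJc hJsum hn1lo hn1hi z a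
  refine ⟨fun a => ?_, ?_, fun z a a' _ => ?_⟩
  · rw [d.expec_sub, key, key]
  · rw [d.expec_finset_sum]
    refine Finset.sum_congr rfl fun a _ => ?_
    rw [d.expec_const_mul, d.expec_sub, key, key]
  · rw [d.expec_sub, key, key]
end
end

section
/- Under the two-stage randomized design, for every mechanism a with J_a ≥ 2, the between-cluster sample covariance satisfies E[σ̂_b²(1,0;a)] = σ_b²(1,0;a) − (1/J) Σ_{j=1}^J σ_j²(1,0;a)/n_j. -/
/-!
Two-stage randomized experiments (Jiang & Imai).
STATEMENT 0: Unbiasedness of Ŷ(z,a): E[Ŷ(z,a)] = Ȳ(z,a).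
-/

open scoped BigOperators

noncomputable section

open Finset
set_option linter.unusedSectionVars false
set_option linter.unusedVariables false
set_option maxHeartbeats 1000000


section Helpers
variable {ι : Type*} [DecidableEq ι]

lemma sum_mul_sum_split (F : Finset ι) (f g : ι → ℝ) :
    (∑ j ∈ F, f j) * (∑ j ∈ F, g j)
      = ∑ j ∈ F, f j * g j + ∑ p ∈ F.offDiag, f p.1 * g p.2 := by
  rw [Finset.sum_mul_sum, ← Finset.sum_product']
  rw [← Finset.diag_union_offDiag F,
    Finset.sum_union (Finset.disjoint_diag_offDiag F), Finset.sum_diag]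

omit [DecidableEq ι] in
lemma centered_sum (F : Finset ι) (f g : ι → ℝ) (c : ℝ)
    (hc : (F.card : ℝ) = c) (hc0 : c ≠ 0) :
    ∑ j ∈ F, (f j - (∑ i ∈ F, f i) / c) * (g j - (∑ i ∈ F, g i) / c)
      = ∑ j ∈ F, f j * g j - (∑ i ∈ F, f i) * (∑ i ∈ F, g i) / c := by
  have h : ∀ j ∈ F, (f j - (∑ i ∈ F, f i) / c) * (g j - (∑ i ∈ F, g i) / c)
      = f j * g j - ((∑ i ∈ F, f i) / c) * g j - f j * ((∑ i ∈ F, g i) / c)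
        + ((∑ i ∈ F, f i) / c) * ((∑ i ∈ F, g i) / c) := by
    intro j _; ring
  rw [Finset.sum_congr rfl h]
  simp only [Finset.sum_add_distrib, Finset.sum_sub_distrib, ← Finset.mul_sum,
    ← Finset.sum_mul, Finset.sum_const, nsmul_eq_mul, hc]
  field_simp
  ring

lemma exists_perm_pair {j k j' k' : ι} (h : j ≠ k) (h' : j' ≠ k') :
    ∃ σ : Equiv.Perm ι, σ j = j' ∧ σ k = k' := by
  have h1 : j' ≠ (Equiv.swap j j') k := by
    intro e
    apply h
    apply (Equiv.swap j j').injective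
    rw [Equiv.swap_apply_left, ← e]
  refine ⟨(Equiv.swap j j').trans (Equiv.swap ((Equiv.swap j j') k) k'), ?_, ?_⟩
  · simp only [Equiv.trans_apply, Equiv.swap_apply_left]
    exact Equiv.swap_apply_of_ne_of_ne h1 h'
  · simp only [Equiv.trans_apply, Equiv.swap_apply_left]

end Helpers

section Count
variable {α : Type*} [Fintype α] [DecidableEq α]

/-- The number of `k`-subsets containing a fixed point does not depend on the point. -/
lemma count_mem_const (k : ℕ) (i i' : α) :
    ((powersetCard k (univ : Finset α)).filter (fun T => i ∈ T)).card
      = ((powersetCard k (univ : Finset α)).filter (fun T => i' ∈ T)).card := by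
  apply Finset.card_nbij' (fun T => T.map (Equiv.swap i i').toEmbedding)
      (fun T => T.map (Equiv.swap i i').toEmbedding)
  · intro T hT
    simp only [Finset.mem_coe, Finset.mem_filter, Finset.mem_powersetCard_univ, Finset.card_map] at hT ⊢
    refine ⟨hT.1, ?_⟩
    rw [Finset.mem_map]
    exact ⟨i, hT.2, by simp⟩
  · intro T hT
    simp only [Finset.mem_coe, Finset.mem_filter, Finset.mem_powersetCard_univ, Finset.card_map] at hT ⊢
    refine ⟨hT.1, ?_⟩
    rw [Finset.mem_map]
    exact ⟨i', hT.2, by simp⟩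
  · intro T _
    ext x
    simp [Finset.mem_map, Equiv.swap_apply_self]
  · intro T _
    ext x
    simp [Finset.mem_map, Equiv.swap_apply_self]

lemma count_mem_mul (k : ℕ) (i : α) :
    ((powersetCard k (univ : Finset α)).filter (fun T => i ∈ T)).card * Fintype.card α
      = k * (powersetCard k (univ : Finset α)).card := by
  have hsum : ∑ i' : α, ((powersetCard k (univ : Finset α)).filter (fun T => i' ∈ T)).card
      = k * (powersetCard k (univ : Finset α)).card := by
    have : ∀ i' : α, ((powersetCard k (univ : Finset α)).filter (fun T => i' ∈ T)).card
        = ∑ T ∈ powersetCard k (univ : Finset α), if i' ∈ T then 1 else 0 := fun i' =>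
      Finset.card_filter _ _
    rw [Finset.sum_congr rfl fun i' _ => this i', Finset.sum_comm]
    rw [Finset.sum_congr rfl (fun T hT => ?_), Finset.sum_const, smul_eq_mul, mul_comm]
    have hTc : T.card = k := Finset.mem_powersetCard_univ.mp hT
    calc ∑ i' : α, (if i' ∈ T then 1 else 0)
        = T.card := by simp [Finset.sum_ite_mem]
      _ = k := hTc
  rw [← hsum, Finset.sum_congr rfl fun i' _ => count_mem_const k i' i, Finset.sum_const,
    smul_eq_mul, Finset.card_univ, mul_comm]

end Count

section Count2
variable {α : Type*} [Fintype α] [DecidableEq α]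

lemma count_pair_const (k : ℕ) {i l i' l' : α} (h : i ≠ l) (h' : i' ≠ l') :
    ((powersetCard k (univ : Finset α)).filter (fun T => i ∈ T ∧ l ∉ T)).card
      = ((powersetCard k (univ : Finset α)).filter (fun T => i' ∈ T ∧ l' ∉ T)).card := by
  obtain ⟨σ, hσ1, hσ2⟩ := exists_perm_pair h h'
  apply Finset.card_nbij' (fun T => T.map σ.toEmbedding) (fun T => T.map σ.symm.toEmbedding)
  · intro T hT
    simp only [Finset.mem_coe, Finset.mem_filter, Finset.mem_powersetCard_univ, Finset.card_map,
      Finset.mem_map_equiv] at hT ⊢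
    refine ⟨hT.1, ?_, ?_⟩
    · rw [show σ.symm i' = i from by rw [← hσ1, Equiv.symm_apply_apply]]; exact hT.2.1
    · rw [show σ.symm l' = l from by rw [← hσ2, Equiv.symm_apply_apply]]; exact hT.2.2
  · intro T hT
    simp only [Finset.mem_coe, Finset.mem_filter, Finset.mem_powersetCard_univ, Finset.card_map,
      Finset.mem_map_equiv] at hT ⊢
    refine ⟨hT.1, ?_, ?_⟩
    · simpa [hσ1] using hT.2.1
    · simpa [hσ2] using hT.2.2
  · intro T _; ext x; simp [Finset.mem_map_equiv]
  · intro T _; ext x; simp [Finset.mem_map_equiv]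


lemma offDiag_filter_eq {α : Type*} [Fintype α] [DecidableEq α] (T : Finset α) :
    ((univ : Finset α).offDiag).filter (fun p => p.1 ∈ T ∧ p.2 ∉ T) = T ×ˢ (univ \ T) := by
  ext p
  simp only [Finset.mem_filter, Finset.mem_offDiag, Finset.mem_product,
    Finset.mem_sdiff, Finset.mem_univ, true_and]
  constructor
  · rintro ⟨_, h2⟩; exact h2
  · rintro ⟨h1, h2⟩; exact ⟨fun e => h2 (e ▸ h1), h1, h2⟩

lemma count_pair_mul (k : ℕ) {i l : α} (hil : i ≠ l) :
    ((powersetCard k (univ : Finset α)).filter (fun T => i ∈ T ∧ l ∉ T)).card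
        * (Fintype.card α * (Fintype.card α - 1))
      = (k * (Fintype.card α - k)) * (powersetCard k (univ : Finset α)).card := by
  have hinner : ∀ T ∈ powersetCard k (univ : Finset α),
      ((univ : Finset α).offDiag.filter (fun p => p.1 ∈ T ∧ p.2 ∉ T)).card
        = k * (Fintype.card α - k) := by
    intro T hT
    have hTc : T.card = k := Finset.mem_powersetCard_univ.mp hT
    rw [offDiag_filter_eq T, Finset.card_product, Finset.card_sdiff_of_subset (Finset.subset_univ T),
      Finset.card_univ, hTc]
  have hsum : ∑ p ∈ (univ : Finset α).offDiag,
      ((powersetCard k (univ : Finset α)).filter (fun T => p.1 ∈ T ∧ p.2 ∉ T)).card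
      = (k * (Fintype.card α - k)) * (powersetCard k (univ : Finset α)).card := by
    have e1 : ∀ p : α × α, ((powersetCard k (univ : Finset α)).filter
        (fun T => p.1 ∈ T ∧ p.2 ∉ T)).card
        = ∑ T ∈ powersetCard k (univ : Finset α), if p.1 ∈ T ∧ p.2 ∉ T then 1 else 0 :=
      fun p => Finset.card_filter _ _
    rw [Finset.sum_congr rfl fun p _ => e1 p, Finset.sum_comm]
    rw [Finset.sum_congr rfl (fun T hT => ?_), Finset.sum_const, smul_eq_mul, mul_comm]
    rw [← Finset.card_filter]
    exact hinner T hT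
  calc ((powersetCard k (univ : Finset α)).filter (fun T => i ∈ T ∧ l ∉ T)).card
        * (Fintype.card α * (Fintype.card α - 1))
      = ∑ p ∈ (univ : Finset α).offDiag,
          ((powersetCard k (univ : Finset α)).filter (fun T => p.1 ∈ T ∧ p.2 ∉ T)).card := by
        rw [Finset.sum_congr rfl (fun p hp => count_pair_const k
          (Finset.mem_offDiag.mp hp).2.2 hil), Finset.sum_const, smul_eq_mul,
          Finset.offDiag_card, Finset.card_univ, mul_comm, Nat.mul_sub_one]
    _ = _ := hsum
end Count2

section Moments
variable {α : Type*} [Fintype α] [DecidableEq α]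

-- from p2/p3 (placeholders, will be concatenated)
lemma sum_subsets_sum (k : ℕ) (x : α → ℝ) :
    (∑ T ∈ powersetCard k (univ : Finset α), ∑ i ∈ T, x i) * (Fintype.card α : ℝ)
      = (k : ℝ) * ((powersetCard k (univ : Finset α)).card : ℝ) * ∑ i, x i := by
  have step : ∑ T ∈ powersetCard k (univ : Finset α), ∑ i ∈ T, x i
      = ∑ i, (((powersetCard k (univ : Finset α)).filter (fun T => i ∈ T)).card : ℝ) * x i := by
    have e1 : ∀ T : Finset α, ∑ i ∈ T, x i = ∑ i, if i ∈ T then x i else 0 := by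
      intro T; rw [Finset.sum_ite_mem, Finset.univ_inter]
    rw [Finset.sum_congr rfl fun T _ => e1 T, Finset.sum_comm]
    refine Finset.sum_congr rfl fun i _ => ?_
    rw [← Finset.sum_filter, Finset.sum_const, nsmul_eq_mul]
  rw [step, Finset.sum_mul, Finset.mul_sum]
  refine Finset.sum_congr rfl fun i _ => ?_
  have := count_mem_mul k i
  have hc : (((powersetCard k (univ : Finset α)).filter (fun T => i ∈ T)).card : ℝ)
      * (Fintype.card α : ℝ) = (k : ℝ) * ((powersetCard k (univ : Finset α)).card : ℝ) := by
    exact_mod_cast congrArg (Nat.cast : ℕ → ℝ) this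
  calc (((powersetCard k (univ : Finset α)).filter (fun T => i ∈ T)).card : ℝ) * x i
        * (Fintype.card α : ℝ)
      = ((((powersetCard k (univ : Finset α)).filter (fun T => i ∈ T)).card : ℝ)
        * (Fintype.card α : ℝ)) * x i := by ring
    _ = _ := by rw [hc]

lemma sum_subsets_cross (k : ℕ) (x y : α → ℝ) :
    (∑ T ∈ powersetCard k (univ : Finset α),
        (∑ i ∈ T, x i) * (∑ i ∈ univ \ T, y i)) * ((Fintype.card α * (Fintype.card α - 1) : ℕ) : ℝ)
      = ((k * (Fintype.card α - k) : ℕ) : ℝ) * ((powersetCard k (univ : Finset α)).card : ℝ)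
          * ∑ p ∈ (univ : Finset α).offDiag, x p.1 * y p.2 := by
  have step : ∑ T ∈ powersetCard k (univ : Finset α), (∑ i ∈ T, x i) * (∑ i ∈ univ \ T, y i)
      = ∑ p ∈ (univ : Finset α).offDiag,
          (((powersetCard k (univ : Finset α)).filter (fun T => p.1 ∈ T ∧ p.2 ∉ T)).card : ℝ)
            * (x p.1 * y p.2) := by
    have e1 : ∀ T : Finset α, (∑ i ∈ T, x i) * (∑ i ∈ univ \ T, y i)
        = ∑ p ∈ (univ : Finset α).offDiag,
            if p.1 ∈ T ∧ p.2 ∉ T then x p.1 * y p.2 else 0 := by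
      intro T
      rw [Finset.sum_mul_sum, ← Finset.sum_product', ← offDiag_filter_eq T,
        Finset.sum_filter]
    rw [Finset.sum_congr rfl fun T _ => e1 T, Finset.sum_comm]
    refine Finset.sum_congr rfl fun p _ => ?_
    rw [← Finset.sum_filter, Finset.sum_const, nsmul_eq_mul]
  rw [step, Finset.sum_mul, Finset.mul_sum]
  refine Finset.sum_congr rfl fun p hp => ?_
  have hne := (Finset.mem_offDiag.mp hp).2.2
  have := count_pair_mul k hne
  have hc : (((powersetCard k (univ : Finset α)).filter (fun T => p.1 ∈ T ∧ p.2 ∉ T)).card : ℝ)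
      * ((Fintype.card α * (Fintype.card α - 1) : ℕ) : ℝ)
      = ((k * (Fintype.card α - k) : ℕ) : ℝ) * ((powersetCard k (univ : Finset α)).card : ℝ) := by
    exact_mod_cast congrArg (Nat.cast : ℕ → ℝ) this
  calc _ = ((((powersetCard k (univ : Finset α)).filter (fun T => p.1 ∈ T ∧ p.2 ∉ T)).card : ℝ)
        * ((Fintype.card α * (Fintype.card α - 1) : ℕ) : ℝ)) * (x p.1 * y p.2) := by ring
    _ = _ := by rw [hc]

end Moments

section EMoments
variable {α : Type*} [Fintype α] [DecidableEq α]

lemma E_hat1 {k : ℕ} (hk : 0 < k) (hkN : k < Fintype.card α) (x : α → ℝ) :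
    ∑ T ∈ powersetCard k (univ : Finset α), (∑ i ∈ T, x i) / (k : ℝ)
      = ((powersetCard k (univ : Finset α)).card : ℝ) * ((∑ i, x i) / (Fintype.card α : ℝ)) := by
  have hN : (0:ℝ) < (Fintype.card α : ℝ) := by exact_mod_cast hk.trans hkN
  have hk' : (0:ℝ) < (k:ℝ) := by exact_mod_cast hk
  have h := sum_subsets_sum k x
  rw [← Finset.sum_div, ← mul_div_assoc, div_eq_div_iff hk'.ne' hN.ne']
  linear_combination h

lemma E_hat0 {k : ℕ} (hk : 0 < k) (hkN : k < Fintype.card α) (y : α → ℝ) :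
    ∑ T ∈ powersetCard k (univ : Finset α),
        (∑ i ∈ univ \ T, y i) / ((Fintype.card α : ℝ) - (k : ℝ))
      = ((powersetCard k (univ : Finset α)).card : ℝ) * ((∑ i, y i) / (Fintype.card α : ℝ)) := by
  have hN : (0:ℝ) < (Fintype.card α : ℝ) := by exact_mod_cast hk.trans hkN
  have hNk : (0:ℝ) < (Fintype.card α : ℝ) - (k : ℝ) := by
    have : (k:ℝ) < (Fintype.card α : ℝ) := by exact_mod_cast hkN
    linarith
  have h := sum_subsets_sum k y
  have e1 : ∀ T ∈ powersetCard k (univ : Finset α),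
      (∑ i ∈ univ \ T, y i) = (∑ i, y i) - ∑ i ∈ T, y i := fun T _ =>
    Finset.sum_sdiff_eq_sub (Finset.subset_univ T)
  rw [Finset.sum_congr rfl fun T hT => by rw [e1 T hT], ← Finset.sum_div,
    Finset.sum_sub_distrib, Finset.sum_const, nsmul_eq_mul, ← mul_div_assoc,
    div_eq_div_iff hNk.ne' hN.ne']
  linear_combination -h

lemma E_hat10 {k : ℕ} (hk : 0 < k) (hkN : k < Fintype.card α) (x y : α → ℝ) :
    ∑ T ∈ powersetCard k (univ : Finset α),
        ((∑ i ∈ T, x i) / (k : ℝ)) * ((∑ i ∈ univ \ T, y i) / ((Fintype.card α : ℝ) - (k : ℝ)))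
      = ((powersetCard k (univ : Finset α)).card : ℝ) *
          (((∑ i, x i) / (Fintype.card α : ℝ)) * ((∑ i, y i) / (Fintype.card α : ℝ))
            - (∑ i, (x i - (∑ i', x i') / (Fintype.card α : ℝ))
                * (y i - (∑ i', y i') / (Fintype.card α : ℝ))) / ((Fintype.card α : ℝ) - 1)
              / (Fintype.card α : ℝ)) := by
  set N := Fintype.card α with hNdef
  have hN2 : 2 ≤ N := by omega
  have hN : (0:ℝ) < (N : ℝ) := by exact_mod_cast hk.trans hkN
  have hk' : (0:ℝ) < (k:ℝ) := by exact_mod_cast hk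
  have hNk : (0:ℝ) < (N : ℝ) - (k : ℝ) := by
    have : (k:ℝ) < (N : ℝ) := by exact_mod_cast hkN
    linarith
  have hN1 : (0:ℝ) < (N : ℝ) - 1 := by
    have : (1:ℝ) < (N:ℝ) := by exact_mod_cast hN2
    linarith
  have hP := sum_subsets_cross k x y
  have hcast1 : ((N * (N - 1) : ℕ) : ℝ) = (N:ℝ) * ((N:ℝ) - 1) := by
    push_cast [Nat.cast_sub (by omega : 1 ≤ N)]; ring
  have hcast2 : ((k * (N - k) : ℕ) : ℝ) = (k:ℝ) * ((N:ℝ) - (k:ℝ)) := by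
    push_cast [Nat.cast_sub (le_of_lt hkN)]; ring
  rw [hcast1, hcast2] at hP
  have hcent : (∑ i, (x i - (∑ i', x i') / (N : ℝ)) * (y i - (∑ i', y i') / (N : ℝ)))
      = ∑ i, x i * y i - (∑ i, x i) * (∑ i, y i) / (N:ℝ) := by
    have := centered_sum (univ : Finset α) x y (N:ℝ) (by simp [hNdef]) hN.ne'
    simpa using this
  have hsplit := sum_mul_sum_split (univ : Finset α) x y
  have lhs_eq : ∑ T ∈ powersetCard k (univ : Finset α),
        ((∑ i ∈ T, x i) / (k : ℝ)) * ((∑ i ∈ univ \ T, y i) / ((N : ℝ) - (k : ℝ)))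
      = (∑ T ∈ powersetCard k (univ : Finset α),
          (∑ i ∈ T, x i) * (∑ i ∈ univ \ T, y i)) / ((k:ℝ) * ((N:ℝ) - (k:ℝ))) := by
    rw [Finset.sum_congr rfl fun T (_ : T ∈ powersetCard k (univ : Finset α)) =>
      div_mul_div_comm (∑ i ∈ T, x i) ((k:ℝ)) (∑ i ∈ univ \ T, y i) ((N:ℝ) - (k:ℝ)),
      ← Finset.sum_div]
  have hoff : ∑ p ∈ (univ : Finset α).offDiag, x p.1 * y p.2
      = (∑ i, x i) * (∑ i, y i) - ∑ i, x i * y i := by linarith [hsplit]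
  rw [hoff] at hP
  have hNN : ((N:ℝ) * ((N:ℝ) - 1)) ≠ 0 := by positivity
  have hP' : (∑ T ∈ powersetCard k (univ : Finset α),
      (∑ i ∈ T, x i) * (∑ i ∈ univ \ T, y i))
      = (k:ℝ) * ((N:ℝ) - (k:ℝ)) * ((powersetCard k (univ : Finset α)).card : ℝ)
        * ((∑ i, x i) * (∑ i, y i) - ∑ i, x i * y i) / ((N:ℝ) * ((N:ℝ) - 1)) := by
    rw [eq_div_iff hNN]; exact hP
  rw [lhs_eq, hcent, hP']
  have h1 : ((k:ℝ)) ≠ 0 := hk'.ne'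
  have h2 : ((N:ℝ) - (k:ℝ)) ≠ 0 := hNk.ne'
  have h3 : ((N:ℝ)) ≠ 0 := hN.ne'
  have h4 : ((N:ℝ) - 1) ≠ 0 := hN1.ne'
  generalize (∑ i, x i) = Sx
  generalize (∑ i, y i) = Sy
  generalize (∑ i, x i * y i) = Sxy
  generalize ((powersetCard k (univ : Finset α)).card : ℝ) = C
  field_simp
  ring
end EMoments

section Pi
variable {ι : Type*} [Fintype ι] [DecidableEq ι] {β : ι → Type*} [∀ i, DecidableEq (β i)]

lemma sum_piFinset_one (t : ∀ i, Finset (β i)) (j : ι) (g : β j → ℝ) :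
    (∑ x ∈ Fintype.piFinset t, g (x j)) * ((t j).card : ℝ)
      = (∏ i, ((t i).card : ℝ)) * (∑ b ∈ t j, g b) := by
  classical
  set f : ∀ i, β i → ℝ := fun i b => if h : i = j then g (h ▸ b) else 1 with hf
  have hprod : ∀ x : ∀ i, β i, (∏ i, f i (x i)) = g (x j) := by
    intro x
    rw [← Finset.mul_prod_erase (univ) (fun i => f i (x i)) (Finset.mem_univ j)]
    have h1 : f j (x j) = g (x j) := by simp [hf]
    have h2 : ∏ i ∈ univ.erase j, f i (x i) = 1 :=
      Finset.prod_eq_one fun i hi => by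
        simp [hf, (Finset.mem_erase.mp hi).1]
    rw [h1, h2, mul_one]
  have key := Finset.prod_univ_sum t f
  rw [Finset.sum_congr rfl fun x _ => (hprod x).symm, ← key]
  rw [← Finset.mul_prod_erase (univ) (fun i => ∑ b ∈ t i, f i b) (Finset.mem_univ j),
    ← Finset.mul_prod_erase (univ) (fun i => ((t i).card : ℝ)) (Finset.mem_univ j)]
  have h3 : ∑ b ∈ t j, f j b = ∑ b ∈ t j, g b := Finset.sum_congr rfl fun b _ => by simp [hf]
  have h4 : ∀ i ∈ univ.erase j, (∑ b ∈ t i, f i b) = ((t i).card : ℝ) := by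
    intro i hi
    rw [Finset.sum_congr rfl fun b _ => ?_, Finset.sum_const, nsmul_eq_mul, mul_one]
    simp [hf, (Finset.mem_erase.mp hi).1]
  rw [h3, Finset.prod_congr rfl h4]
  ring

lemma sum_piFinset_two (t : ∀ i, Finset (β i)) {j k : ι} (hjk : j ≠ k)
    (g1 : β j → ℝ) (g2 : β k → ℝ) :
    (∑ x ∈ Fintype.piFinset t, g1 (x j) * g2 (x k)) * (((t j).card : ℝ) * ((t k).card : ℝ))
      = (∏ i, ((t i).card : ℝ)) * ((∑ b ∈ t j, g1 b) * (∑ b ∈ t k, g2 b)) := by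
  classical
  set f : ∀ i, β i → ℝ := fun i b =>
    if h : i = j then g1 (h ▸ b) else if h' : i = k then g2 (h' ▸ b) else 1 with hf
  have hprod : ∀ x : ∀ i, β i, (∏ i, f i (x i)) = g1 (x j) * g2 (x k) := by
    intro x
    rw [← Finset.mul_prod_erase (univ) (fun i => f i (x i)) (Finset.mem_univ j),
      ← Finset.mul_prod_erase (univ.erase j) (fun i => f i (x i))
        (Finset.mem_erase.mpr ⟨hjk.symm, Finset.mem_univ k⟩)]
    have h1 : f j (x j) = g1 (x j) := by simp [hf]
    have h2 : f k (x k) = g2 (x k) := by simp [hf, hjk.symm]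
    have h3 : ∏ i ∈ (univ.erase j).erase k, f i (x i) = 1 :=
      Finset.prod_eq_one fun i hi => by
        have hik := (Finset.mem_erase.mp hi).1
        have hij := (Finset.mem_erase.mp (Finset.mem_erase.mp hi).2).1
        simp [hf, hij, hik]
    rw [h1, h2, h3, mul_one]
  have key := Finset.prod_univ_sum t f
  rw [Finset.sum_congr rfl fun x _ => (hprod x).symm, ← key]
  rw [← Finset.mul_prod_erase (univ) (fun i => ∑ b ∈ t i, f i b) (Finset.mem_univ j),
    ← Finset.mul_prod_erase (univ.erase j) (fun i => ∑ b ∈ t i, f i b)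
      (Finset.mem_erase.mpr ⟨hjk.symm, Finset.mem_univ k⟩),
    ← Finset.mul_prod_erase (univ) (fun i => ((t i).card : ℝ)) (Finset.mem_univ j),
    ← Finset.mul_prod_erase (univ.erase j) (fun i => ((t i).card : ℝ))
      (Finset.mem_erase.mpr ⟨hjk.symm, Finset.mem_univ k⟩)]
  have h3 : ∑ b ∈ t j, f j b = ∑ b ∈ t j, g1 b := Finset.sum_congr rfl fun b _ => by simp [hf]
  have h4 : ∑ b ∈ t k, f k b = ∑ b ∈ t k, g2 b :=
    Finset.sum_congr rfl fun b _ => by simp [hf, hjk.symm]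
  have h5 : ∀ i ∈ (univ.erase j).erase k, (∑ b ∈ t i, f i b) = ((t i).card : ℝ) := by
    intro i hi
    have hik := (Finset.mem_erase.mp hi).1
    have hij := (Finset.mem_erase.mp (Finset.mem_erase.mp hi).2).1
    rw [Finset.sum_congr rfl fun b _ => ?_, Finset.sum_const, nsmul_eq_mul, mul_one]
    simp [hf, hij, hik]
  rw [h3, h4, Finset.prod_congr rfl h5]
  ring
end Pi



namespace TwoStageDesign
variable (d : TwoStageDesign)

lemma mem_mechA_iff {A : Fin d.J → Fin d.m} :
    A ∈ d.mechA ↔ ∀ a, (Finset.univ.filter fun j => A j = a).card = d.Jc a := by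
  simp [mechA]

lemma comp_perm_mem_mechA {A : Fin d.J → Fin d.m} (hA : A ∈ d.mechA)
    (σ : Equiv.Perm (Fin d.J)) : (A ∘ σ) ∈ d.mechA := by
  rw [mem_mechA_iff] at hA ⊢
  intro a
  rw [← hA a]
  apply Finset.card_nbij' (fun j => σ j) (fun j => σ.symm j)
  · intro j hj
    simp only [Finset.mem_coe, Finset.mem_filter, Finset.mem_univ, true_and, Function.comp_apply] at hj ⊢
    exact hj
  · intro j hj
    simp only [Finset.mem_coe, Finset.mem_filter, Finset.mem_univ, true_and, Function.comp_apply] at hj ⊢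
    simpa using hj
  · intro j _; simp
  · intro j _; simp

lemma cnt1_const (a : Fin d.m) (j j' : Fin d.J) :
    ((d.mechA.filter fun A => A j = a).card) = ((d.mechA.filter fun A => A j' = a).card) := by
  apply Finset.card_nbij' (fun A => A ∘ (Equiv.swap j j')) (fun A => A ∘ (Equiv.swap j j'))
  · intro A hA
    simp only [Finset.mem_coe, Finset.mem_filter] at hA ⊢
    exact ⟨d.comp_perm_mem_mechA hA.1 _, by simpa [Function.comp, Equiv.swap_apply_right] using hA.2⟩
  · intro A hA
    simp only [Finset.mem_coe, Finset.mem_filter] at hA ⊢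
    exact ⟨d.comp_perm_mem_mechA hA.1 _, by simpa [Function.comp, Equiv.swap_apply_left] using hA.2⟩
  · intro A _; funext x; simp [Function.comp, Equiv.swap_apply_self]
  · intro A _; funext x; simp [Function.comp, Equiv.swap_apply_self]

lemma cnt1_mul (a : Fin d.m) (j : Fin d.J) :
    ((d.mechA.filter fun A => A j = a).card) * d.J = d.mechA.card * d.Jc a := by
  have hsum : ∑ j' : Fin d.J, ((d.mechA.filter fun A => A j' = a).card)
      = d.mechA.card * d.Jc a := by
    have e1 : ∀ j' : Fin d.J, ((d.mechA.filter fun A => A j' = a).card)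
        = ∑ A ∈ d.mechA, if A j' = a then 1 else 0 := fun j' => Finset.card_filter _ _
    rw [Finset.sum_congr rfl fun j' _ => e1 j', Finset.sum_comm]
    rw [Finset.sum_congr rfl (fun A hA => ?_), Finset.sum_const, smul_eq_mul]
    rw [← Finset.card_filter]
    exact (d.mem_mechA_iff.mp hA) a
  rw [← hsum, Finset.sum_congr rfl fun j' _ => d.cnt1_const a j' j, Finset.sum_const,
    smul_eq_mul, Finset.card_univ, Fintype.card_fin, mul_comm]

lemma cnt2_const (a : Fin d.m) {j k j' k' : Fin d.J} (h : j ≠ k) (h' : j' ≠ k') :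
    ((d.mechA.filter fun A => A j = a ∧ A k = a).card)
      = ((d.mechA.filter fun A => A j' = a ∧ A k' = a).card) := by
  obtain ⟨σ, hσ1, hσ2⟩ := exists_perm_pair h h'
  apply Finset.card_nbij' (fun A => A ∘ σ.symm) (fun A => A ∘ σ)
  · intro A hA
    simp only [Finset.mem_coe, Finset.mem_filter] at hA ⊢
    refine ⟨d.comp_perm_mem_mechA hA.1 _, ?_, ?_⟩
    · simp only [Function.comp_apply, ← hσ1, Equiv.symm_apply_apply]; exact hA.2.1
    · simp only [Function.comp_apply, ← hσ2, Equiv.symm_apply_apply]; exact hA.2.2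
  · intro A hA
    simp only [Finset.mem_coe, Finset.mem_filter] at hA ⊢
    refine ⟨d.comp_perm_mem_mechA hA.1 _, ?_, ?_⟩
    · simp only [Function.comp_apply, hσ1]; exact hA.2.1
    · simp only [Function.comp_apply, hσ2]; exact hA.2.2
  · intro A _; funext x; simp
  · intro A _; funext x; simp

lemma cnt2_mul (a : Fin d.m) {j k : Fin d.J} (hjk : j ≠ k) :
    ((d.mechA.filter fun A => A j = a ∧ A k = a).card) * (d.J * d.J - d.J)
      = d.mechA.card * (d.Jc a * d.Jc a - d.Jc a) := by
  have hsum : ∑ p ∈ (Finset.univ : Finset (Fin d.J)).offDiag,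
      ((d.mechA.filter fun A => A p.1 = a ∧ A p.2 = a).card)
      = d.mechA.card * (d.Jc a * d.Jc a - d.Jc a) := by
    have e1 : ∀ p : Fin d.J × Fin d.J, ((d.mechA.filter fun A => A p.1 = a ∧ A p.2 = a).card)
        = ∑ A ∈ d.mechA, if A p.1 = a ∧ A p.2 = a then 1 else 0 := fun p =>
      Finset.card_filter _ _
    rw [Finset.sum_congr rfl fun p _ => e1 p, Finset.sum_comm]
    rw [Finset.sum_congr rfl (fun A hA => ?_), Finset.sum_const, smul_eq_mul]
    rw [← Finset.card_filter]
    have hset : (Finset.univ : Finset (Fin d.J)).offDiag.filter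
        (fun p => A p.1 = a ∧ A p.2 = a)
        = (Finset.univ.filter fun j => A j = a).offDiag := by
      ext p
      simp only [Finset.mem_filter, Finset.mem_offDiag, Finset.mem_univ, true_and]
      tauto
    rw [hset, Finset.offDiag_card, (d.mem_mechA_iff.mp hA) a]
  rw [← hsum, Finset.sum_congr rfl fun p hp =>
      d.cnt2_const a (Finset.mem_offDiag.mp hp).2.2 hjk,
    Finset.sum_const, smul_eq_mul, Finset.offDiag_card, Finset.card_univ, Fintype.card_fin,
    mul_comm]



lemma card_treatA (A : Fin d.J → Fin d.m) :
    (d.treatA A).card = ∏ j, ((Finset.powersetCard (d.n1 j (A j))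
      (Finset.univ : Finset (Fin (d.n j)))).card) := by
  rw [d.treatA_eq_piFinset, Fintype.card_piFinset]

lemma mem_treatA_card {A : Fin d.J → Fin d.m} {S : (j : Fin d.J) → Finset (Fin (d.n j))}
    (hS : S ∈ d.treatA A) (j : Fin d.J) : (S j).card = d.n1 j (A j) := by
  rw [treatA, Finset.mem_filter] at hS
  exact hS.2 j

lemma hatYj_true (A : Fin d.J → Fin d.m) (S : (j : Fin d.J) → Finset (Fin (d.n j)))
    (j : Fin d.J) (hc : (S j).card = d.n1 j (A j)) :
    d.hatYj A S true j = (∑ i ∈ S j, d.Y j i true (A j)) / (d.n1 j (A j) : ℝ) := by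
  unfold hatYj
  have hfilt : (Finset.univ.filter fun i : Fin (d.n j) => decide (i ∈ S j) = true) = S j := by
    ext i; simp
  have hsum : ∀ i ∈ S j, d.Yobs A S j i = d.Y j i true (A j) := by
    intro i hi; unfold Yobs; simp [hi]
  rw [hfilt, Finset.sum_congr rfl hsum, hc]

lemma hatYj_false (A : Fin d.J → Fin d.m) (S : (j : Fin d.J) → Finset (Fin (d.n j)))
    (j : Fin d.J) (hc : (S j).card = d.n1 j (A j)) :
    d.hatYj A S false j = (∑ i ∈ Finset.univ \ S j, d.Y j i false (A j))
      / ((d.n j : ℝ) - (d.n1 j (A j) : ℝ)) := by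
  unfold hatYj
  have hfilt : (Finset.univ.filter fun i : Fin (d.n j) => decide (i ∈ S j) = false)
      = Finset.univ \ S j := by
    ext i; simp
  have hsum : ∀ i ∈ Finset.univ \ S j, d.Yobs A S j i = d.Y j i false (A j) := by
    intro i hi; unfold Yobs
    have : i ∉ S j := (Finset.mem_sdiff.mp hi).2
    simp [this]
  have hcard : ((Finset.univ \ S j).card : ℝ) = (d.n j : ℝ) - (d.n1 j (A j) : ℝ) := by
    rw [Finset.card_sdiff_of_subset (Finset.subset_univ _), Finset.card_univ, Fintype.card_fin,
      Nat.cast_sub (by simpa using Finset.card_le_univ (S j)), hc]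
  rw [hfilt, Finset.sum_congr rfl hsum, hcard]

lemma PC1 (A : Fin d.J → Fin d.m) (j : Fin d.J)
    (hk : 0 < d.n1 j (A j)) (hkn : d.n1 j (A j) < d.n j) :
    ∑ S ∈ d.treatA A, d.hatYj A S true j * d.hatYj A S false j
      = ((d.treatA A).card : ℝ) * (d.Ybarj j true (A j) * d.Ybarj j false (A j)
          - d.sigU j true false (A j) (A j) / (d.n j : ℝ)) := by
  set k := d.n1 j (A j) with hkdef
  set x : Fin (d.n j) → ℝ := fun i => d.Y j i true (A j) with hx
  set y : Fin (d.n j) → ℝ := fun i => d.Y j i false (A j) with hy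
  set gT : Finset (Fin (d.n j)) → ℝ := fun T =>
    ((∑ i ∈ T, x i) / (k : ℝ)) * ((∑ i ∈ Finset.univ \ T, y i) / ((d.n j : ℝ) - (k : ℝ)))
    with hgT
  have hstep : ∀ S ∈ d.treatA A, d.hatYj A S true j * d.hatYj A S false j = gT (S j) := by
    intro S hS
    rw [d.hatYj_true A S j (d.mem_treatA_card hS j), d.hatYj_false A S j (d.mem_treatA_card hS j)]
  rw [Finset.sum_congr rfl hstep, d.treatA_eq_piFinset A]
  have key := sum_piFinset_one
    (fun j' => Finset.powersetCard (d.n1 j' (A j')) (Finset.univ : Finset (Fin (d.n j')))) j gT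
  have hN : Fintype.card (Fin (d.n j)) = d.n j := Fintype.card_fin _
  have hkn' : k < Fintype.card (Fin (d.n j)) := by rw [hN]; exact hkn
  have hE := E_hat10 hk hkn' x y
  rw [hN] at hE
  have hCj : ((Finset.powersetCard k (Finset.univ : Finset (Fin (d.n j)))).card : ℝ) ≠ 0 := by
    rw [Finset.card_powersetCard, Finset.card_univ, hN]
    exact_mod_cast (Nat.choose_pos hkn.le).ne'
  rw [hE] at key
  have goal1 : ∑ S ∈ Fintype.piFinset (fun j' => Finset.powersetCard (d.n1 j' (A j'))
      (Finset.univ : Finset (Fin (d.n j')))), gT (S j)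
      = (∏ j', ((Finset.powersetCard (d.n1 j' (A j'))
          (Finset.univ : Finset (Fin (d.n j')))).card : ℝ))
        * ((∑ i, x i) / (d.n j : ℝ) * ((∑ i, y i) / (d.n j : ℝ))
          - (∑ i, (x i - (∑ i', x i') / (d.n j : ℝ)) * (y i - (∑ i', y i') / (d.n j : ℝ)))
            / ((d.n j : ℝ) - 1) / (d.n j : ℝ)) := by
    apply mul_right_cancel₀ hCj
    rw [key]; ring
  rw [goal1]
  have hcard : (((Fintype.piFinset fun j' => Finset.powersetCard (d.n1 j' (A j'))
      (Finset.univ : Finset (Fin (d.n j')))).card : ℕ) : ℝ)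
      = ∏ j', ((Finset.powersetCard (d.n1 j' (A j'))
        (Finset.univ : Finset (Fin (d.n j')))).card : ℝ) := by
    rw [Fintype.card_piFinset]; push_cast; ring
  rw [hcard]
  unfold Ybarj sigU
  rfl


lemma PC2 (A : Fin d.J → Fin d.m) {j k : Fin d.J} (hjk : j ≠ k)
    (hk1 : 0 < d.n1 j (A j)) (hkn1 : d.n1 j (A j) < d.n j)
    (hk2 : 0 < d.n1 k (A k)) (hkn2 : d.n1 k (A k) < d.n k) :
    ∑ S ∈ d.treatA A, d.hatYj A S true j * d.hatYj A S false k
      = ((d.treatA A).card : ℝ) * (d.Ybarj j true (A j) * d.Ybarj k false (A k)) := by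
  set g1 : Finset (Fin (d.n j)) → ℝ := fun T =>
    (∑ i ∈ T, d.Y j i true (A j)) / (d.n1 j (A j) : ℝ) with hg1
  set g2 : Finset (Fin (d.n k)) → ℝ := fun T =>
    (∑ i ∈ Finset.univ \ T, d.Y k i false (A k)) / ((d.n k : ℝ) - (d.n1 k (A k) : ℝ)) with hg2
  have hstep : ∀ S ∈ d.treatA A, d.hatYj A S true j * d.hatYj A S false k
      = g1 (S j) * g2 (S k) := by
    intro S hS
    rw [d.hatYj_true A S j (d.mem_treatA_card hS j), d.hatYj_false A S k (d.mem_treatA_card hS k)]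
  rw [Finset.sum_congr rfl hstep, d.treatA_eq_piFinset A]
  have key := sum_piFinset_two
    (fun j' => Finset.powersetCard (d.n1 j' (A j')) (Finset.univ : Finset (Fin (d.n j'))))
    hjk g1 g2
  have hNj : Fintype.card (Fin (d.n j)) = d.n j := Fintype.card_fin _
  have hNk : Fintype.card (Fin (d.n k)) = d.n k := Fintype.card_fin _
  have hE1 := E_hat1 hk1 (by rw [hNj]; exact hkn1) (fun i => d.Y j i true (A j))
  have hE2 := E_hat0 hk2 (by rw [hNk]; exact hkn2) (fun i => d.Y k i false (A k))
  rw [hNj] at hE1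
  rw [hNk] at hE2
  have hCj : ((Finset.powersetCard (d.n1 j (A j)) (Finset.univ : Finset (Fin (d.n j)))).card : ℝ)
      ≠ 0 := by
    rw [Finset.card_powersetCard, Finset.card_univ, hNj]
    exact_mod_cast (Nat.choose_pos hkn1.le).ne'
  have hCk : ((Finset.powersetCard (d.n1 k (A k)) (Finset.univ : Finset (Fin (d.n k)))).card : ℝ)
      ≠ 0 := by
    rw [Finset.card_powersetCard, Finset.card_univ, hNk]
    exact_mod_cast (Nat.choose_pos hkn2.le).ne'
  have goal1 : ∑ S ∈ Fintype.piFinset (fun j' => Finset.powersetCard (d.n1 j' (A j'))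
      (Finset.univ : Finset (Fin (d.n j')))), g1 (S j) * g2 (S k)
      = (∏ j', ((Finset.powersetCard (d.n1 j' (A j'))
          (Finset.univ : Finset (Fin (d.n j')))).card : ℝ))
        * (((∑ i, d.Y j i true (A j)) / (d.n j : ℝ))
          * ((∑ i, d.Y k i false (A k)) / (d.n k : ℝ))) := by
    apply mul_right_cancel₀ (mul_ne_zero hCj hCk)
    rw [key, hE1, hE2]; ring
  rw [goal1]
  have hcard : (((Fintype.piFinset fun j' => Finset.powersetCard (d.n1 j' (A j'))
      (Finset.univ : Finset (Fin (d.n j')))).card : ℕ) : ℝ)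
      = ∏ j', ((Finset.powersetCard (d.n1 j' (A j'))
        (Finset.univ : Finset (Fin (d.n j')))).card : ℝ) := by
    rw [Fintype.card_piFinset]; push_cast; ring
  rw [hcard]
  unfold Ybarj
  rfl

lemma treatA_card_pos (hhi : ∀ j a, d.n1 j a ≤ d.n j - 1) (A : Fin d.J → Fin d.m) :
    0 < (d.treatA A).card := by
  rw [d.card_treatA]
  apply Finset.prod_pos
  intro j _
  rw [Finset.card_powersetCard, Finset.card_univ, Fintype.card_fin]
  exact Nat.choose_pos ((hhi j (A j)).trans (Nat.sub_le _ _))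

end TwoStageDesign

/-- **Expectation of the between-cluster sample covariance.** Under the two-stage
randomized design, for every mechanism `a` with `J_a ≥ 2`,
`E[σ̂_b²(1,0;a)] = σ_b²(1,0;a) − (1/J) ∑_j σ_j²(1,0;a)/n_j`. -/
theorem expec_sigBhat_cov (d : TwoStageDesign)
    (hJ : 2 ≤ d.J) (hn : ∀ j, 2 ≤ d.n j)
    (hJc : ∀ a, 1 ≤ d.Jc a) (hJsum : ∑ a, d.Jc a = d.J)
    (hn1lo : ∀ j a, 1 ≤ d.n1 j a) (hn1hi : ∀ j a, d.n1 j a ≤ d.n j - 1)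
    (a : Fin d.m) (hJa : 2 ≤ d.Jc a) :
    d.expec (fun A S => d.sigBhat A S true false a) =
      d.sigB true false a a - (1 / (d.J : ℝ)) * ∑ j, d.sigU j true false a a / (d.n j : ℝ) := by
  classical
  have hMpos : 0 < d.mechA.card := Finset.card_pos.mpr (d.mechA_nonempty hJsum)
  have hM0 : (d.mechA.card : ℝ) ≠ 0 := by exact_mod_cast hMpos.ne'
  have hJ0 : (d.J : ℝ) ≠ 0 := by
    have : (0:ℝ) < (d.J : ℝ) := by exact_mod_cast (by omega : 0 < d.J)
    exact this.ne'
  have hJ1 : (d.J : ℝ) - 1 ≠ 0 := by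
    have : (1:ℝ) < (d.J : ℝ) := by exact_mod_cast (by omega : 1 < d.J)
    linarith
  have hJa0 : (d.Jc a : ℝ) ≠ 0 := by
    have : (0:ℝ) < (d.Jc a : ℝ) := by exact_mod_cast (by omega : 0 < d.Jc a)
    exact this.ne'
  have hJa1 : (d.Jc a : ℝ) - 1 ≠ 0 := by
    have : (1:ℝ) < (d.Jc a : ℝ) := by exact_mod_cast (by omega : 1 < d.Jc a)
    linarith
  have hlt : ∀ j (a' : Fin d.m), d.n1 j a' < d.n j := fun j a' =>
    lt_of_le_of_lt (hn1hi j a') (Nat.sub_lt (by have := hn j; omega) one_pos)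
  have hcS0 : ∀ A : Fin d.J → Fin d.m, ((d.treatA A).card : ℝ) ≠ 0 := fun A => by
    exact_mod_cast (d.treatA_card_pos hn1hi A).ne'
  -- notation
  set μ : Fin d.J → ℝ := fun j => d.Ybarj j true a with hμ
  set ν : Fin d.J → ℝ := fun j => d.Ybarj j false a with hν
  set q : Fin d.J → ℝ := fun j => d.sigU j true false a a / (d.n j : ℝ) with hq
  set F : (Fin d.J → Fin d.m) → Finset (Fin d.J) :=
    fun A => Finset.univ.filter (fun j => A j = a) with hF
  -- Step A: pointwise rewriting of sigBhat
  have hpoint : ∀ A ∈ d.mechA, ∀ S ∈ d.treatA A, d.sigBhat A S true false a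
      = ((∑ j ∈ F A, d.hatYj A S true j * d.hatYj A S false j)
        - ((∑ j ∈ F A, d.hatYj A S true j * d.hatYj A S false j)
            + ∑ p ∈ (F A).offDiag, d.hatYj A S true p.1 * d.hatYj A S false p.2) / (d.Jc a : ℝ))
        / ((d.Jc a : ℝ) - 1) := by
    intro A hA S _
    have hcardF : ((F A).card : ℝ) = (d.Jc a : ℝ) := by
      exact_mod_cast congrArg (Nat.cast : ℕ → ℝ) (d.mem_mechA_iff.mp hA a)
    unfold TwoStageDesign.sigBhat TwoStageDesign.hatY
    rw [centered_sum (F A) (d.hatYj A S true) (d.hatYj A S false) (d.Jc a : ℝ) hcardF hJa0]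
    rw [sum_mul_sum_split (F A) (d.hatYj A S true) (d.hatYj A S false)]
  -- Step B: sum over S for fixed A
  have hinner : ∀ A ∈ d.mechA, ∑ S ∈ d.treatA A, d.sigBhat A S true false a
      = ((d.treatA A).card : ℝ) *
        (((∑ j ∈ F A, (μ j * ν j - q j))
          - ((∑ j ∈ F A, (μ j * ν j - q j)) + ∑ p ∈ (F A).offDiag, μ p.1 * ν p.2) / (d.Jc a : ℝ))
          / ((d.Jc a : ℝ) - 1)) := by
    intro A hA
    rw [Finset.sum_congr rfl (fun S hS => hpoint A hA S hS)]
    have hsum1 : ∑ S ∈ d.treatA A, ∑ j ∈ F A, d.hatYj A S true j * d.hatYj A S false j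
        = ((d.treatA A).card : ℝ) * ∑ j ∈ F A, (μ j * ν j - q j) := by
      rw [Finset.sum_comm, Finset.mul_sum]
      refine Finset.sum_congr rfl fun j hj => ?_
      have hAj : A j = a := (Finset.mem_filter.mp hj).2
      rw [d.PC1 A j (hn1lo j (A j)) (hlt j (A j)), hAj]
    have hsum2 : ∑ S ∈ d.treatA A,
          ∑ p ∈ (F A).offDiag, d.hatYj A S true p.1 * d.hatYj A S false p.2
        = ((d.treatA A).card : ℝ) * ∑ p ∈ (F A).offDiag, μ p.1 * ν p.2 := by
      rw [Finset.sum_comm, Finset.mul_sum]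
      refine Finset.sum_congr rfl fun p hp => ?_
      have hmem := Finset.mem_offDiag.mp hp
      have hA1 : A p.1 = a := (Finset.mem_filter.mp hmem.1).2
      have hA2 : A p.2 = a := (Finset.mem_filter.mp hmem.2.1).2
      rw [d.PC2 A hmem.2.2 (hn1lo p.1 (A p.1)) (hlt p.1 (A p.1))
        (hn1lo p.2 (A p.2)) (hlt p.2 (A p.2)), hA1, hA2]
    have expand : ∑ S ∈ d.treatA A,
        ((∑ j ∈ F A, d.hatYj A S true j * d.hatYj A S false j)
          - ((∑ j ∈ F A, d.hatYj A S true j * d.hatYj A S false j)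
              + ∑ p ∈ (F A).offDiag, d.hatYj A S true p.1 * d.hatYj A S false p.2) / (d.Jc a : ℝ))
          / ((d.Jc a : ℝ) - 1)
        = ((∑ S ∈ d.treatA A, ∑ j ∈ F A, d.hatYj A S true j * d.hatYj A S false j)
          - ((∑ S ∈ d.treatA A, ∑ j ∈ F A, d.hatYj A S true j * d.hatYj A S false j)
              + ∑ S ∈ d.treatA A, ∑ p ∈ (F A).offDiag,
                  d.hatYj A S true p.1 * d.hatYj A S false p.2) / (d.Jc a : ℝ))
          / ((d.Jc a : ℝ) - 1) := by
      rw [← Finset.sum_div, Finset.sum_sub_distrib, ← Finset.sum_div, Finset.sum_add_distrib]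
    rw [expand, hsum1, hsum2]
    ring
  -- Step C: reduce expectation
  have houter : d.expec (fun A S => d.sigBhat A S true false a)
      = (∑ A ∈ d.mechA,
          (((∑ j ∈ F A, (μ j * ν j - q j))
            - ((∑ j ∈ F A, (μ j * ν j - q j)) + ∑ p ∈ (F A).offDiag, μ p.1 * ν p.2)
              / (d.Jc a : ℝ)) / ((d.Jc a : ℝ) - 1))) / (d.mechA.card : ℝ) := by
    have hper : ∀ A ∈ d.mechA, ∑ S ∈ d.treatA A,
        d.sigBhat A S true false a / ((d.mechA.card : ℝ) * ((d.treatA A).card : ℝ))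
        = (((∑ j ∈ F A, (μ j * ν j - q j))
            - ((∑ j ∈ F A, (μ j * ν j - q j)) + ∑ p ∈ (F A).offDiag, μ p.1 * ν p.2)
              / (d.Jc a : ℝ)) / ((d.Jc a : ℝ) - 1)) / (d.mechA.card : ℝ) := by
      intro A hA
      rw [← Finset.sum_div, hinner A hA]
      rw [div_eq_div_iff (by exact mul_ne_zero hM0 (hcS0 A)) hM0]
      ring
    unfold TwoStageDesign.expec
    rw [Finset.sum_congr rfl hper, ← Finset.sum_div]
  rw [houter]
  -- Step D: swap sums over A
  have hswap1 : ∑ A ∈ d.mechA, ∑ j ∈ F A, (μ j * ν j - q j)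
      = ((d.mechA.card : ℝ) * (d.Jc a : ℝ) / (d.J : ℝ)) * ∑ j, (μ j * ν j - q j) := by
    have e1 : ∀ A : Fin d.J → Fin d.m, ∑ j ∈ F A, (μ j * ν j - q j)
        = ∑ j, if A j = a then (μ j * ν j - q j) else 0 := fun A =>
      Finset.sum_filter (fun j => A j = a) (fun j => μ j * ν j - q j)
    rw [Finset.sum_congr rfl fun A _ => e1 A, Finset.sum_comm, Finset.mul_sum]
    refine Finset.sum_congr rfl fun j _ => ?_
    rw [← Finset.sum_filter, Finset.sum_const, nsmul_eq_mul]
    have hc := d.cnt1_mul a j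
    have hcR : ((d.mechA.filter fun A => A j = a).card : ℝ)
        = (d.mechA.card : ℝ) * (d.Jc a : ℝ) / (d.J : ℝ) := by
      rw [eq_div_iff hJ0]
      exact_mod_cast congrArg (Nat.cast : ℕ → ℝ) hc
    rw [hcR]
  have hswap2 : ∑ A ∈ d.mechA, ∑ p ∈ (F A).offDiag, μ p.1 * ν p.2
      = ((d.mechA.card : ℝ) * ((d.Jc a : ℝ) * (d.Jc a : ℝ) - (d.Jc a : ℝ))
          / ((d.J : ℝ) * (d.J : ℝ) - (d.J : ℝ)))
        * ∑ p ∈ (Finset.univ : Finset (Fin d.J)).offDiag, μ p.1 * ν p.2 := by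
    have hset : ∀ A : Fin d.J → Fin d.m, (F A).offDiag
        = (Finset.univ : Finset (Fin d.J)).offDiag.filter
            (fun p => A p.1 = a ∧ A p.2 = a) := by
      intro A
      ext p
      simp only [Finset.mem_filter, Finset.mem_offDiag, Finset.mem_univ, true_and, hF]
      tauto
    have e1 : ∀ A : Fin d.J → Fin d.m, ∑ p ∈ (F A).offDiag, μ p.1 * ν p.2
        = ∑ p ∈ (Finset.univ : Finset (Fin d.J)).offDiag,
            if A p.1 = a ∧ A p.2 = a then μ p.1 * ν p.2 else 0 := fun A => by
      rw [hset A, Finset.sum_filter]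
    rw [Finset.sum_congr rfl fun A _ => e1 A, Finset.sum_comm, Finset.mul_sum]
    refine Finset.sum_congr rfl fun p hp => ?_
    rw [← Finset.sum_filter, Finset.sum_const, nsmul_eq_mul]
    have hc := d.cnt2_mul a (Finset.mem_offDiag.mp hp).2.2
    have hJJ : ((d.J : ℝ) * (d.J : ℝ) - (d.J : ℝ)) ≠ 0 := by
      have h2 : (2:ℝ) ≤ (d.J : ℝ) := by exact_mod_cast hJ
      nlinarith
    have hcR : ((d.mechA.filter fun A => A p.1 = a ∧ A p.2 = a).card : ℝ)
        = (d.mechA.card : ℝ) * ((d.Jc a : ℝ) * (d.Jc a : ℝ) - (d.Jc a : ℝ))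
            / ((d.J : ℝ) * (d.J : ℝ) - (d.J : ℝ)) := by
      rw [eq_div_iff hJJ]
      have hcast : (((d.mechA.filter fun A => A p.1 = a ∧ A p.2 = a).card) : ℝ)
            * (((d.J * d.J - d.J : ℕ)) : ℝ)
          = (d.mechA.card : ℝ) * (((d.Jc a * d.Jc a - d.Jc a : ℕ)) : ℝ) := by
        exact_mod_cast congrArg (Nat.cast : ℕ → ℝ) hc
      have c1 : (((d.J * d.J - d.J : ℕ)) : ℝ) = (d.J : ℝ) * (d.J : ℝ) - (d.J : ℝ) := by
        have : d.J ≤ d.J * d.J := Nat.le_mul_of_pos_left d.J (Nat.lt_of_lt_of_le Nat.zero_lt_two hJ)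
        push_cast [Nat.cast_sub this]
        ring
      have c2 : (((d.Jc a * d.Jc a - d.Jc a : ℕ)) : ℝ)
          = (d.Jc a : ℝ) * (d.Jc a : ℝ) - (d.Jc a : ℝ) := by
        have : d.Jc a ≤ d.Jc a * d.Jc a := Nat.le_mul_of_pos_left (d.Jc a) (Nat.lt_of_lt_of_le Nat.zero_lt_two hJa)
        push_cast [Nat.cast_sub this]
        ring
      rw [c1, c2] at hcast
      linarith [hcast]
    rw [hcR]
  -- Step E: final algebra
  have hlin : ∑ A ∈ d.mechA,
      (((∑ j ∈ F A, (μ j * ν j - q j))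
        - ((∑ j ∈ F A, (μ j * ν j - q j)) + ∑ p ∈ (F A).offDiag, μ p.1 * ν p.2)
          / (d.Jc a : ℝ)) / ((d.Jc a : ℝ) - 1))
      = ((∑ A ∈ d.mechA, ∑ j ∈ F A, (μ j * ν j - q j))
        - ((∑ A ∈ d.mechA, ∑ j ∈ F A, (μ j * ν j - q j))
            + ∑ A ∈ d.mechA, ∑ p ∈ (F A).offDiag, μ p.1 * ν p.2)
          / (d.Jc a : ℝ)) / ((d.Jc a : ℝ) - 1) := by
    rw [← Finset.sum_div, Finset.sum_sub_distrib, ← Finset.sum_div, Finset.sum_add_distrib]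
  rw [hlin, hswap1, hswap2]
  -- sigB rewriting
  have hcardJ : ((Finset.univ : Finset (Fin d.J)).card : ℝ) = (d.J : ℝ) := by
    simp
  have hsigB : d.sigB true false a a
      = ((∑ j, μ j * ν j)
        - ((∑ j, μ j * ν j) + ∑ p ∈ (Finset.univ : Finset (Fin d.J)).offDiag, μ p.1 * ν p.2)
          / (d.J : ℝ)) / ((d.J : ℝ) - 1) := by
    unfold TwoStageDesign.sigB TwoStageDesign.Ybar
    rw [centered_sum (Finset.univ : Finset (Fin d.J)) μ ν (d.J : ℝ) hcardJ hJ0]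
    rw [sum_mul_sum_split (Finset.univ : Finset (Fin d.J)) μ ν]
  rw [hsigB]
  have hsplit : ∑ j, (μ j * ν j - q j) = (∑ j, μ j * ν j) - ∑ j, q j :=
    Finset.sum_sub_distrib _ _
  rw [hsplit]
  have hq' : ∑ j, d.sigU j true false a a / (d.n j : ℝ) = ∑ j, q j := rfl
  rw [hq']
  have hJJ : ((d.J : ℝ) * (d.J : ℝ) - (d.J : ℝ)) ≠ 0 := by
    have h2 : (2:ℝ) ≤ (d.J : ℝ) := by exact_mod_cast hJ
    nlinarith
  field_simp
  ring
end
end
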